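/- arXiv:1601.00767 — 4 statements merged into one kernel-verified Lean document; each statement's English description precedes it below -/
import Mathlib

section
/- Let {C(t), t ≥ 0} be a family of nonempty closed convex subsets of H converging in the Mosco sense to a nonempty closed convex set C_∞, i.e.: (a) for every sequence t_n → +∞ and every sequence c_n ∈ C(t_n) converging weakly to some c ∈ H, one has c ∈ C_∞; and (b) every z ∈ C_∞ is the strong limit of points z(t) ∈ C(t). Assume additionally that for every z ∈ C_∞ there exists a selection z(·) with z(t) ∈ C(t) for all t, z(t) → z strongly, and ∫₀^{+∞} ‖z(t) − z‖² dt < +∞. Let x(·) be a strong global solution of the sweeping process ẋ(t) + N_{C(t)}(x(t)) ∋ 0 (so x(t) ∈ C(t) and −ẋ(t) ∈ N_{C(t)}(x(t)) for a.e. t) having finite energy, ∫₀^{+∞} ‖ẋ(t)‖² dt < +∞. Then there exists x_∞ ∈ C_∞ such that x(t) converges weakly to x_∞ in H as t → +∞. -/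
open MeasureTheory Set Filter Topology ENNReal RealInnerProductSpace

variable {H : Type*} [NormedAddCommGroup H] [InnerProductSpace ℝ H] [CompleteSpace H]

/-- A multivalued operator `M : H ⇉ H`, identified with its graph, is monotone. -/
def MonotoneGraph (M : Set (H × H)) : Prop :=
  ∀ p ∈ M, ∀ q ∈ M, (0:ℝ) ≤ ⟪p.1 - q.1, p.2 - q.2⟫

/-- Maximal monotone operator: the graph is not strictly contained in a monotone graph. -/
def MaximalMonotoneGraph (M : Set (H × H)) : Prop :=
  MonotoneGraph M ∧ ∀ N : Set (H × H), MonotoneGraph N → M ⊆ N → N = M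

/-- The Brézis–Haraux function `G_M(x,u) = sup_{(y,v) ∈ gph M} ⟨x−y, v−u⟩`. -/
noncomputable def BH (M : Set (H × H)) (x u : H) : EReal :=
  ⨆ q ∈ M, ((⟪x - q.1, q.2 - u⟫ : ℝ) : EReal)

/-- Value of an extended real in `ℝ≥0∞` (used to express `∫ < +∞` for nonnegative quantities). -/
noncomputable def ennval (x : EReal) : ℝ≥0∞ :=
  if x = ⊤ then ⊤ else ENNReal.ofReal x.toReal

/-- `x` is locally absolutely continuous on `[0,∞)` with derivative `x'`. -/
def LocAC (x x' : ℝ → H) : Prop :=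
  (∀ T : ℝ, IntegrableOn x' (Icc 0 T)) ∧
    ∀ t : ℝ, 0 ≤ t → x t = x 0 + ∫ s in (0:ℝ)..t, x' s

/-- Weak convergence in average of the trajectory `x` to `xlim`. -/
def WeakAvgConv (x : ℝ → H) (xlim : H) : Prop :=
  ∀ y : H, Tendsto (fun t : ℝ => (⟪t⁻¹ • ∫ s in (0:ℝ)..t, x s, y⟫ : ℝ))
    atTop (𝓝 (⟪xlim, y⟫ : ℝ))

/-- Weak convergence of `x(t)` to `xlim` as `t → +∞`. -/
def WeakConv (x : ℝ → H) (xlim : H) : Prop :=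
  ∀ y : H, Tendsto (fun t : ℝ => (⟪x t, y⟫ : ℝ)) atTop (𝓝 (⟪xlim, y⟫ : ℝ))

/-- Convexity for `ℝ ∪ {+∞}`-valued (here `EReal`-valued) functions. -/
def EConvex {E : Type*} [AddCommGroup E] [Module ℝ E] (f : E → EReal) : Prop :=
  ∀ x y : E, ∀ a b : ℝ, 0 ≤ a → 0 ≤ b → a + b = 1 →
    f (a • x + b • y) ≤ (a : EReal) * f x + (b : EReal) * f y

/-- Subdifferential of an extended-real-valued convex function. -/
def ESubdiff (f : H → EReal) (x : H) : Set H :=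
  {p : H | ∀ y : H, f x + ((⟪p, y - x⟫ : ℝ) : EReal) ≤ f y}

/-- Graph of the subdifferential operator. -/
def ESubdiffGraph (f : H → EReal) : Set (H × H) :=
  {q : H × H | q.2 ∈ ESubdiff f q.1}

/-- Graph of the sum of two operators. -/
def GraphSum (A B : Set (H × H)) : Set (H × H) :=
  {q : H × H | ∃ u v : H, (q.1, u) ∈ A ∧ (q.1, v) ∈ B ∧ q.2 = u + v}

/-- Graph of `A + c • B`. -/
def ScaledSum (A B : Set (H × H)) (c : ℝ) : Set (H × H) :=
  {q : H × H | ∃ u v : H, (q.1, u) ∈ A ∧ (q.1, v) ∈ B ∧ q.2 = u + c • v}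

/-- Graph of `c • A`. -/
def SmulGraph (c : ℝ) (A : Set (H × H)) : Set (H × H) :=
  {q : H × H | ∃ u : H, (q.1, u) ∈ A ∧ q.2 = c • u}

/-- Domain of an operator given by its graph. -/
def GraphDom (A : Set (H × H)) : Set H := {x : H | ∃ u : H, (x, u) ∈ A}

/-- Graph of the normal cone operator of a set `C`. -/
def NormalConeGraph (C : Set H) : Set (H × H) :=
  {q : H × H | q.1 ∈ C ∧ ∀ y ∈ C, (⟪q.2, y - q.1⟫ : ℝ) ≤ 0}

/-- Lower semicontinuous hull of an extended-real-valued function. -/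
noncomputable def lscHull {E : Type*} [TopologicalSpace E] (f : E → EReal) : E → EReal :=
  fun x => Filter.liminf f (𝓝 x)

/-- Inf-compactness: bounded sublevel sets are relatively compact. -/
def InfCompact (f : H → EReal) : Prop :=
  ∀ R : ℝ, 0 < R → ∀ l : ℝ, IsCompact (closure {x : H | ‖x‖ ≤ R ∧ f x ≤ (l : EReal)})

/-- Set of global minimizers of `f`. -/
def ArgMin (f : H → EReal) : Set H := {x : H | ∀ y : H, f x ≤ f y}

/-- Set of minimizers of `f` over the set `C`. -/
def ArgMinOn (f : H → EReal) (C : Set H) : Set H := {x ∈ C | ∀ y ∈ C, f x ≤ f y}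

/-- Fenchel conjugate of an extended-real-valued function. -/
noncomputable def FConj (f : H → EReal) (p : H) : EReal :=
  ⨆ x : H, (((⟪p, x⟫ : ℝ) : EReal) - f x)

/-- Support function of a set `C`. -/
noncomputable def SuppFn (C : Set H) (p : H) : EReal :=
  ⨆ x : C, ((⟪p, (x : H)⟫ : ℝ) : EReal)


section AuxSweeping
variable {x x' : ℝ → H}


/-- Tail of a finite lower Lebesgue integral tends to zero (no measurability assumed). -/
lemma tail_lintegral_tendsto_zero (f : ℝ → ℝ≥0∞)
    (hf : ∫⁻ r in Ici (0:ℝ), f r < ⊤) :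
    Tendsto (fun s : ℝ => ∫⁻ r in Ici s, f r) atTop (𝓝 0) := by
  set T : ℝ → ℝ≥0∞ := fun s => ∫⁻ r in Ici s, f r with hT
  have hanti : Antitone T := fun s s' hss' =>
    lintegral_mono' (Measure.restrict_mono (Ici_subset_Ici.2 hss') le_rfl) le_rfl
  -- measurable minorant with same integral
  obtain ⟨g, hgm, hgle, hgeq⟩ := exists_measurable_le_lintegral_eq (volume.restrict (Ici (0:ℝ))) f
  -- split lemma
  have hsplit : ∀ (h : ℝ → ℝ≥0∞) (s : ℝ), 0 ≤ s →
      ∫⁻ r in Ici (0:ℝ), h r = (∫⁻ r in Ico (0:ℝ) s, h r) + ∫⁻ r in Ici s, h r := by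
    intro h s hs
    have hdisj : Disjoint (Ico (0:ℝ) s) (Ici s) := by
      rw [Set.disjoint_left]; rintro x ⟨_, h2⟩ h3; exact absurd h3 (not_le.2 h2)
    rw [← lintegral_add_measure, ← Measure.restrict_union hdisj
      measurableSet_Ici, Ico_union_Ici_eq_Ici hs]
  -- tail of f bounded by tail of g
  have key : ∀ s : ℝ, 0 ≤ s → T s ≤ ∫⁻ r in Ici s, g r := by
    intro s hs
    have h1 : (∫⁻ r in Ico (0:ℝ) s, g r) + T s ≤
        (∫⁻ r in Ico (0:ℝ) s, g r) + ∫⁻ r in Ici s, g r := by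
      calc (∫⁻ r in Ico (0:ℝ) s, g r) + T s
          ≤ (∫⁻ r in Ico (0:ℝ) s, f r) + T s :=
            add_le_add (lintegral_mono hgle) le_rfl
        _ = ∫⁻ r in Ici (0:ℝ), f r := (hsplit f s hs).symm
        _ = ∫⁻ r in Ici (0:ℝ), g r := hgeq
        _ = (∫⁻ r in Ico (0:ℝ) s, g r) + ∫⁻ r in Ici s, g r := hsplit g s hs
    have hfin : (∫⁻ r in Ico (0:ℝ) s, g r) ≠ ⊤ := by
      refine ne_top_of_le_ne_top ?_ (le_trans (le_trans ?_ (le_of_eq hgeq.symm)) le_rfl)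
      · exact hf.ne
      · rw [hsplit g s hs]; exact le_self_add
    exact (ENNReal.add_le_add_iff_left hfin).1 h1
  -- tail of g tends to zero via a finite measure
  have hgfin : ∫⁻ r in Ici (0:ℝ), g r < ⊤ := hgeq ▸ hf
  set ν : Measure ℝ := (volume.restrict (Ici (0:ℝ))).withDensity g with hν
  have hνapp : ∀ s : ℝ, 0 ≤ s → ν (Ici s) = ∫⁻ r in Ici s, g r := by
    intro s hs
    rw [hν, withDensity_apply _ measurableSet_Ici, Measure.restrict_restrict measurableSet_Ici,
      Ici_inter_Ici, sup_eq_left.2 hs]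
  have hνfin : ν univ ≠ ⊤ := by
    rw [hν, withDensity_apply _ MeasurableSet.univ, Measure.restrict_univ]
    exact hgfin.ne
  have hνseq : Tendsto (fun n : ℕ => ν (Ici (n : ℝ))) atTop (𝓝 0) := by
    have h0 : (⋂ n : ℕ, Ici ((n : ℝ))) = ∅ := by
      ext r; simp only [mem_iInter, mem_Ici, mem_empty_iff_false, iff_false, not_forall, not_le]
      obtain ⟨n, hn⟩ := exists_nat_gt r; exact ⟨n, hn⟩
    have := tendsto_measure_iInter_atTop (μ := ν)
      (fun n : ℕ => (measurableSet_Ici).nullMeasurableSet)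
      (fun m n hmn => Ici_subset_Ici.2 (Nat.cast_le.2 hmn))
      ⟨0, by simp [hνfin]; exact ne_top_of_le_ne_top hνfin (measure_mono (subset_univ _))⟩
    rwa [h0, measure_empty] at this
  -- conclude
  rw [ENNReal.tendsto_nhds_zero]
  intro ε hε
  rcases eventually_atTop.1 ((ENNReal.tendsto_nhds_zero.1 hνseq) ε hε) with ⟨N, hN⟩
  rw [eventually_atTop]
  refine ⟨max (N : ℝ) 0, fun s hs => ?_⟩
  have hsN : (N : ℝ) ≤ s := le_trans (le_max_left _ _) hs
  have hs0 : (0 : ℝ) ≤ s := le_trans (le_max_right _ _) hs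
  calc T s ≤ ∫⁻ r in Ici s, g r := key s hs0
    _ ≤ ∫⁻ r in Ici ((N : ℝ)), g r :=
        lintegral_mono' (Measure.restrict_mono (Ici_subset_Ici.2 hsN) le_rfl) le_rfl
    _ = ν (Ici ((N : ℝ))) := (hνapp _ (Nat.cast_nonneg N)).symm
    _ ≤ ε := hN N le_rfl



lemma cont_of_locac (hint : ∀ T : ℝ, IntegrableOn x' (Icc 0 T))
    (hrep : ∀ t : ℝ, 0 ≤ t → x t = x 0 + ∫ s in (0:ℝ)..t, x' s) :
    ContinuousOn x (Ici 0) := by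
  have hF : ∀ T : ℝ, ContinuousOn (fun r => x 0 + ∫ u in Ioc (0:ℝ) r, x' u) (Icc 0 T) :=
    fun T => continuousOn_const.add (intervalIntegral.continuousOn_primitive (hint T))
  intro t ht
  have h1 : ContinuousWithinAt (fun r => x 0 + ∫ u in Ioc (0:ℝ) r, x' u) (Icc 0 (t+1)) t :=
    hF (t+1) t ⟨ht, by linarith [mem_Ici.1 ht]⟩
  have h2 : Icc (0:ℝ) (t+1) ∈ 𝓝[Ici 0] t := by
    refine mem_of_superset (inter_mem_nhdsWithin _ (Iio_mem_nhds (show t < t+1 by linarith))) ?_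
    rintro r ⟨hr1, hr2⟩; exact ⟨hr1, le_of_lt hr2⟩
  have h3 : ContinuousWithinAt (fun r => x 0 + ∫ u in Ioc (0:ℝ) r, x' u) (Ici 0) t :=
    h1.mono_of_mem_nhdsWithin h2
  refine h3.congr (fun r hr => ?_) ?_
  · rw [hrep r hr, intervalIntegral.integral_of_le hr]
  · rw [hrep t ht, intervalIntegral.integral_of_le ht]

lemma seg_integral (hint : ∀ T : ℝ, IntegrableOn x' (Icc 0 T))
    (hrep : ∀ t : ℝ, 0 ≤ t → x t = x 0 + ∫ s in (0:ℝ)..t, x' s)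
    {s r : ℝ} (hs : 0 ≤ s) (hsr : s ≤ r) :
    x r - x s = ∫ u in Ioc s r, x' u := by
  have hr : (0:ℝ) ≤ r := le_trans hs hsr
  have hII : ∀ a b : ℝ, 0 ≤ a → 0 ≤ b → IntervalIntegrable x' volume a b := by
    intro a b ha hb
    rw [intervalIntegrable_iff]
    refine (hint (max a b)).mono_set (fun u hu => ?_)
    rcases Set.mem_uIoc.1 hu with ⟨h1, h2⟩ | ⟨h1, h2⟩
    · exact ⟨ha.trans h1.le, le_trans h2 (le_max_right a b)⟩
    · exact ⟨hb.trans h1.le, le_trans h2 (le_max_left a b)⟩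
  rw [hrep r hr, hrep s hs, ← intervalIntegral.integral_of_le hsr,
    ← intervalIntegral.integral_interval_sub_left (hII 0 r le_rfl hr) (hII 0 s le_rfl hs)]
  abel

/-- Key energy identity, via Fubini. -/
lemma energy_identity (hint : ∀ T : ℝ, IntegrableOn x' (Icc 0 T))
    (hrep : ∀ t : ℝ, 0 ≤ t → x t = x 0 + ∫ s in (0:ℝ)..t, x' s)
    (z : H) {s t : ℝ} (hs : 0 ≤ s) (hst : s ≤ t) :
    ‖x t - z‖^2 - ‖x s - z‖^2 = 2 * ∫ r in Ioc s t, (⟪x' r, x r - z⟫ : ℝ) := by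
  have ht : (0:ℝ) ≤ t := le_trans hs hst
  set ν := volume.restrict (Ioc s t) with hν
  have hsub : Ioc s t ⊆ Icc 0 t := fun r hr => ⟨le_trans hs (le_of_lt hr.1), hr.2⟩
  have hint' : Integrable x' ν := (hint t).mono_set hsub
  have hintsub : ∀ {a b : ℝ}, s ≤ a → b ≤ t → Integrable x' (volume.restrict (Ioc a b)) :=
    fun {a b} ha hb => (hint t).mono_set (fun r hr => ⟨le_trans hs (le_trans ha (le_of_lt hr.1)), le_trans hr.2 hb⟩)
  have hxd : ∫ u in Ioc s t, x' u = x t - x s := (seg_integral hint hrep hs hst).symm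
  -- continuity and boundedness of x on [s,t]
  have hxc : ContinuousOn x (Icc s t) :=
    (cont_of_locac hint hrep).mono (fun r hr => le_trans hs hr.1)
  have hxm : AEStronglyMeasurable (fun r => x r - z) ν := by
    refine AEStronglyMeasurable.sub ?_ aestronglyMeasurable_const
    exact (hxc.mono Ioc_subset_Icc_self).aestronglyMeasurable measurableSet_Ioc
  obtain ⟨Bd, hBd⟩ : ∃ Bd, ∀ r ∈ Icc s t, ‖x r - z‖ ≤ Bd :=
    isCompact_Icc.exists_bound_of_continuousOn (hxc.sub continuousOn_const)
  -- integrability of the main integrand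
  have hphi : Integrable (fun r => (⟪x' r, x r - z⟫ : ℝ)) ν := by
    refine Integrable.mono' (hint'.norm.mul_const Bd) (hint'.aestronglyMeasurable.inner hxm) ?_
    refine (ae_restrict_iff' measurableSet_Ioc).2 (Eventually.of_forall fun r hr => ?_)
    refine le_trans (abs_real_inner_le_norm _ _) ?_
    exact mul_le_mul_of_nonneg_left (hBd r (Ioc_subset_Icc_self hr)) (norm_nonneg _)
  -- step 1: split off the constant part
  have step1 : ∫ r in Ioc s t, (⟪x' r, x r - z⟫ : ℝ) =
      (⟪x t - x s, x s - z⟫ : ℝ) + ∫ r in Ioc s t, (⟪x' r, x r - x s⟫ : ℝ) := by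
    have e1 : ∀ r : ℝ, (⟪x' r, x r - z⟫ : ℝ) = ⟪x' r, x s - z⟫ + ⟪x' r, x r - x s⟫ := by
      intro r
      rw [← inner_add_right]
      congr 1; abel
    simp_rw [e1]
    rw [integral_add (hint'.inner_const _) (by
      have : (fun r => (⟪x' r, x r - x s⟫ : ℝ)) = fun r => ⟪x' r, x r - z⟫ - ⟪x' r, x s - z⟫ := by
        funext r
        rw [← inner_sub_right]; congr 1; abel
      rw [this]
      exact hphi.sub (hint'.inner_const _))]
    congr 1
    calc ∫ r in Ioc s t, (⟪x' r, x s - z⟫ : ℝ)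
        = ∫ r in Ioc s t, (⟪x s - z, x' r⟫ : ℝ) :=
          integral_congr_ae (Eventually.of_forall fun r => real_inner_comm _ _)
      _ = ⟪x s - z, ∫ r in Ioc s t, x' r⟫ := integral_inner hint' _
      _ = ⟪x t - x s, x s - z⟫ := by rw [hxd, real_inner_comm]
  -- now the quadratic part via Fubini
  have hFm : AEStronglyMeasurable (fun p : ℝ × ℝ => (⟪x' p.1, x' p.2⟫ : ℝ)) (ν.prod ν) :=
    (hint'.aestronglyMeasurable.comp_fst).inner (hint'.aestronglyMeasurable.comp_snd)
  have hFint : Integrable (fun p : ℝ × ℝ => (⟪x' p.1, x' p.2⟫ : ℝ)) (ν.prod ν) := by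
    refine Integrable.mono' (Integrable.mul_prod (L := ℝ) hint'.norm hint'.norm) hFm ?_
    exact Eventually.of_forall fun p => abs_real_inner_le_norm _ _
  have hG'int : Integrable (fun p : ℝ × ℝ => if p.1 < p.2 then (⟪x' p.1, x' p.2⟫ : ℝ) else 0)
      (ν.prod ν) := by
    have : (fun p : ℝ × ℝ => if p.1 < p.2 then (⟪x' p.1, x' p.2⟫ : ℝ) else 0) =
        {p : ℝ × ℝ | p.1 < p.2}.indicator (fun p => (⟪x' p.1, x' p.2⟫ : ℝ)) := by
      funext p; rw [Set.indicator_apply]; rfl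
    rw [this]
    exact hFint.indicator (measurableSet_lt measurable_fst measurable_snd)
  have hGint : Integrable (fun p : ℝ × ℝ => if p.2 < p.1 then (⟪x' p.1, x' p.2⟫ : ℝ) else 0)
      (ν.prod ν) := by
    have : (fun p : ℝ × ℝ => if p.2 < p.1 then (⟪x' p.1, x' p.2⟫ : ℝ) else 0) =
        {p : ℝ × ℝ | p.2 < p.1}.indicator (fun p => (⟪x' p.1, x' p.2⟫ : ℝ)) := by
      funext p; rw [Set.indicator_apply]; rfl
    rw [this]
    exact hFint.indicator (measurableSet_lt measurable_snd measurable_fst)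
  have hne : ∀ r : ℝ, ∀ᵐ τ ∂ν, τ ≠ r := by
    intro r
    have h0 : ν {r} = 0 :=
      le_antisymm (le_trans (Measure.restrict_apply_le _ _) (le_of_eq Real.volume_singleton))
        (zero_le)
    refine ae_iff.2 ?_
    have h' : {τ : ℝ | ¬ τ ≠ r} = {r} := by ext τ; simp [not_not]
    rw [h', h0]
  -- inner-integrability in τ for fixed r
  have hFr : ∀ r : ℝ, Integrable (fun τ => (⟪x' r, x' τ⟫ : ℝ)) ν :=
    fun r => hint'.const_inner (x' r)
  have hFrlt : ∀ r : ℝ, Integrable (fun τ => if τ < r then (⟪x' r, x' τ⟫ : ℝ) else 0) ν := by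
    intro r
    have : (fun τ => if τ < r then (⟪x' r, x' τ⟫ : ℝ) else 0) =
        (Iio r).indicator (fun τ => (⟪x' r, x' τ⟫ : ℝ)) := by
      funext τ; rw [Set.indicator_apply]; rfl
    rw [this]; exact (hFr r).indicator measurableSet_Iio
  have hFrgt : ∀ r : ℝ, Integrable (fun τ => if r < τ then (⟪x' r, x' τ⟫ : ℝ) else 0) ν := by
    intro r
    have : (fun τ => if r < τ then (⟪x' r, x' τ⟫ : ℝ) else 0) =
        (Ioi r).indicator (fun τ => (⟪x' r, x' τ⟫ : ℝ)) := by
      funext τ; rw [Set.indicator_apply]; rfl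
    rw [this]; exact (hFr r).indicator measurableSet_Ioi
  -- step 2 : quadratic part as iterated integral with weak inequality
  have step2 : ∫ r in Ioc s t, (⟪x' r, x r - x s⟫ : ℝ) =
      ∫ r in Ioc s t, ∫ τ in Ioc s t, (if τ ≤ r then (⟪x' r, x' τ⟫ : ℝ) else 0) := by
    refine setIntegral_congr_fun measurableSet_Ioc (fun r hr => ?_)
    have h1 : x r - x s = ∫ τ in Ioc s r, x' τ := seg_integral hint hrep hs hr.1.le
    have h2 : (fun τ => if τ ≤ r then (⟪x' r, x' τ⟫ : ℝ) else 0) =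
        (Iic r).indicator (fun τ => (⟪x' r, x' τ⟫ : ℝ)) := by
      funext τ; rw [Set.indicator_apply]; rfl
    rw [h1, ← integral_inner (hintsub le_rfl hr.2)]
    rw [h2, setIntegral_indicator measurableSet_Iic, Set.Ioc_inter_Iic,
      inf_eq_right.2 hr.2]
  -- step 3 : replace ≤ by <
  have step3 : ∫ r in Ioc s t, (∫ τ in Ioc s t, (if τ ≤ r then (⟪x' r, x' τ⟫ : ℝ) else 0)) =
      ∫ r in Ioc s t, ∫ τ in Ioc s t, (if τ < r then (⟪x' r, x' τ⟫ : ℝ) else 0) := by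
    refine setIntegral_congr_fun measurableSet_Ioc (fun r _ => ?_)
    refine integral_congr_ae ((hne r).mono fun τ hτ => ?_)
    by_cases h : τ < r
    · dsimp only; rw [if_pos h.le, if_pos h]
    · dsimp only; rw [if_neg h, if_neg (fun hle => h (lt_of_le_of_ne hle hτ))]
  -- the total double integral
  have hD : ∫ r in Ioc s t, (∫ τ in Ioc s t, (⟪x' r, x' τ⟫ : ℝ)) = ‖x t - x s‖^2 := by
    have h1 : ∀ r : ℝ, ∫ τ in Ioc s t, (⟪x' r, x' τ⟫ : ℝ) = ⟪x' r, x t - x s⟫ := by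
      intro r
      rw [← hxd]; exact integral_inner hint' _
    simp_rw [h1]
    calc ∫ r in Ioc s t, (⟪x' r, x t - x s⟫ : ℝ)
        = ∫ r in Ioc s t, (⟪x t - x s, x' r⟫ : ℝ) :=
          integral_congr_ae (Eventually.of_forall fun r => real_inner_comm _ _)
      _ = ⟪x t - x s, ∫ r in Ioc s t, x' r⟫ := integral_inner hint' _
      _ = ‖x t - x s‖^2 := by rw [hxd, real_inner_self_eq_norm_sq]
  -- split the total double integral into the two triangles
  have hsplit2 : ∫ r in Ioc s t, (∫ τ in Ioc s t, (⟪x' r, x' τ⟫ : ℝ)) =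
      (∫ r in Ioc s t, ∫ τ in Ioc s t, (if τ < r then (⟪x' r, x' τ⟫ : ℝ) else 0)) +
      ∫ r in Ioc s t, ∫ τ in Ioc s t, (if r < τ then (⟪x' r, x' τ⟫ : ℝ) else 0) := by
    have h1 : ∀ r : ℝ, ∫ τ in Ioc s t, (⟪x' r, x' τ⟫ : ℝ) =
        (∫ τ in Ioc s t, (if τ < r then (⟪x' r, x' τ⟫ : ℝ) else 0)) +
        ∫ τ in Ioc s t, (if r < τ then (⟪x' r, x' τ⟫ : ℝ) else 0) := by
      intro r
      rw [← integral_add (hFrlt r) (hFrgt r)]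
      refine integral_congr_ae ((hne r).mono fun τ hτ => ?_)
      rcases lt_or_gt_of_ne hτ with h | h
      · dsimp only; rw [if_pos h, if_neg (lt_asymm h), add_zero]
      · dsimp only; rw [if_neg (lt_asymm h), if_pos h, zero_add]
    simp_rw [h1]
    refine integral_add ?_ ?_
    · have := hGint.integral_prod_left
      simpa using this
    · have := hG'int.integral_prod_left
      simpa using this
  -- Fubini : the two triangles have equal integrals
  have hswap : ∫ r in Ioc s t, (∫ τ in Ioc s t, (if r < τ then (⟪x' r, x' τ⟫ : ℝ) else 0)) =
      ∫ r in Ioc s t, ∫ τ in Ioc s t, (if τ < r then (⟪x' r, x' τ⟫ : ℝ) else 0) := by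
    have huncurry : Integrable
        (Function.uncurry fun r τ : ℝ => if r < τ then (⟪x' r, x' τ⟫ : ℝ) else 0) (ν.prod ν) := by
      have : (Function.uncurry fun r τ : ℝ => if r < τ then (⟪x' r, x' τ⟫ : ℝ) else 0) =
          fun p : ℝ × ℝ => if p.1 < p.2 then (⟪x' p.1, x' p.2⟫ : ℝ) else 0 := by
        funext p; rfl
      rw [this]; exact hG'int
    have h := integral_integral_swap huncurry
    rw [h]
    refine setIntegral_congr_fun measurableSet_Ioc (fun r _ => ?_)
    refine integral_congr_ae (Eventually.of_forall fun τ => ?_)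
    by_cases hc : τ < r
    · dsimp only; rw [if_pos hc, if_pos hc, real_inner_comm]
    · dsimp only; rw [if_neg hc, if_neg hc]
  -- put everything together
  have hAD : ∫ r in Ioc s t, (⟪x' r, x r - x s⟫ : ℝ) = ‖x t - x s‖^2 / 2 := by
    have h1 := hD
    rw [hsplit2, hswap] at h1
    rw [step2, step3]
    linarith
  rw [step1, hAD]
  have h2 : x t - z = (x t - x s) + (x s - z) := by abel
  rw [h2, norm_add_sq_real]
  ring

lemma inner_integrable (hint : ∀ T : ℝ, IntegrableOn x' (Icc 0 T))
    (hrep : ∀ t : ℝ, 0 ≤ t → x t = x 0 + ∫ s in (0:ℝ)..t, x' s)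
    (z : H) {s t : ℝ} (hs : 0 ≤ s) (hst : s ≤ t) :
    Integrable (fun r => (⟪x' r, x r - z⟫ : ℝ)) (volume.restrict (Ioc s t)) := by
  set ν := volume.restrict (Ioc s t) with hν
  have hsub : Ioc s t ⊆ Icc 0 t := fun r hr => ⟨le_trans hs (le_of_lt hr.1), hr.2⟩
  have hint' : Integrable x' ν := (hint t).mono_set hsub
  have hxc : ContinuousOn x (Icc s t) :=
    (cont_of_locac hint hrep).mono (fun r hr => le_trans hs hr.1)
  have hxm : AEStronglyMeasurable (fun r => x r - z) ν := by
    refine AEStronglyMeasurable.sub ?_ aestronglyMeasurable_const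
    exact (hxc.mono Ioc_subset_Icc_self).aestronglyMeasurable measurableSet_Ioc
  obtain ⟨Bd, hBd⟩ : ∃ Bd, ∀ r ∈ Icc s t, ‖x r - z‖ ≤ Bd :=
    isCompact_Icc.exists_bound_of_continuousOn (hxc.sub continuousOn_const)
  refine Integrable.mono' (hint'.norm.mul_const Bd) (hint'.aestronglyMeasurable.inner hxm) ?_
  refine (ae_restrict_iff' measurableSet_Ioc).2 (Eventually.of_forall fun r hr => ?_)
  refine le_trans (abs_real_inner_le_norm _ _) ?_
  exact mul_le_mul_of_nonneg_left (hBd r (Ioc_subset_Icc_self hr)) (norm_nonneg _)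

private lemma ofReal_max_zero (a : ℝ) : ENNReal.ofReal (a ⊔ 0) = ENNReal.ofReal a := by
  rcases le_total a 0 with h | h
  · rw [sup_eq_right.2 h, ENNReal.ofReal_zero, ENNReal.ofReal_eq_zero.2 h]
  · rw [sup_eq_left.2 h]

/-- The Lyapunov quasi-decrease property. -/
lemma lyapunov (hint : ∀ T : ℝ, IntegrableOn x' (Icc 0 T))
    (hrep : ∀ t : ℝ, 0 ≤ t → x t = x 0 + ∫ s in (0:ℝ)..t, x' s)
    (z : H) (w : ℝ → H)
    (hae : ∀ᵐ r ∂(volume.restrict (Ioi (0:ℝ))),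
      2 * (⟪x' r, x r - z⟫ : ℝ) ≤ ‖x' r‖^2 + ‖w r‖^2)
    (hen : ∫⁻ r in Ici (0:ℝ), ENNReal.ofReal (‖x' r‖^2) < ⊤)
    (hwfin : ∫⁻ r in Ici (0:ℝ), ENNReal.ofReal (‖w r‖^2) < ⊤) :
    ∃ τ : ℝ → ℝ, (∀ s, 0 ≤ τ s) ∧ Tendsto τ atTop (𝓝 0) ∧
      ∀ s t : ℝ, 0 ≤ s → s ≤ t → ‖x t - z‖^2 ≤ ‖x s - z‖^2 + τ s := by
  set T1 : ℝ → ℝ≥0∞ := fun s => ∫⁻ r in Ici s, ENNReal.ofReal (‖x' r‖^2) with hT1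
  set T2 : ℝ → ℝ≥0∞ := fun s => ∫⁻ r in Ici s, ENNReal.ofReal (‖w r‖^2) with hT2
  refine ⟨fun s => (T1 s + T2 s).toReal, fun s => ENNReal.toReal_nonneg, ?_, ?_⟩
  · have h1 := tail_lintegral_tendsto_zero _ hen
    have h2 := tail_lintegral_tendsto_zero _ hwfin
    have h3 : Tendsto (fun s => T1 s + T2 s) atTop (𝓝 (0 + 0)) := h1.add h2
    rw [add_zero] at h3
    have h4 := (ENNReal.tendsto_toReal (by simp : (0:ℝ≥0∞) ≠ ⊤)).comp h3
    simpa [Function.comp_def] using h4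
  · intro s t hs hst
    have ht : (0:ℝ) ≤ t := le_trans hs hst
    set ν := volume.restrict (Ioc s t) with hν
    have hsub : Ioc s t ⊆ Icc 0 t := fun r hr => ⟨le_trans hs (le_of_lt hr.1), hr.2⟩
    have hint' : Integrable x' ν := (hint t).mono_set hsub
    have hid := energy_identity hint hrep z hs hst
    have hphi : Integrable (fun r => (⟪x' r, x r - z⟫ : ℝ)) ν := inner_integrable hint hrep z hs hst
    set ψ : ℝ → ℝ := fun r => 2 * (⟪x' r, x r - z⟫ : ℝ) with hψ
    have hψint : Integrable ψ ν := hphi.const_mul 2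
    have e1 : 2 * ∫ r in Ioc s t, (⟪x' r, x r - z⟫ : ℝ) = ∫ r in Ioc s t, ψ r := by
      rw [hψ, integral_const_mul]
    have e2 : ∫ r in Ioc s t, ψ r ≤ ∫ r in Ioc s t, (ψ r ⊔ 0) :=
      integral_mono hψint hψint.pos_part (fun r => le_sup_left)
    have e3 : ∫ r in Ioc s t, (ψ r ⊔ 0) =
        (∫⁻ r in Ioc s t, ENNReal.ofReal (ψ r)).toReal := by
      rw [integral_eq_lintegral_of_nonneg_ae (f := fun r => ψ r ⊔ 0)
        (Eventually.of_forall (fun r => (le_sup_right : (0:ℝ) ≤ ψ r ⊔ 0)))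
        hψint.pos_part.aestronglyMeasurable]
      congr 1
      exact lintegral_congr fun r => ofReal_max_zero (ψ r)
    -- bound the lintegral
    have haes : ∀ᵐ r ∂ν, 2 * (⟪x' r, x r - z⟫ : ℝ) ≤ ‖x' r‖^2 + ‖w r‖^2 := by
      refine ae_restrict_of_ae_restrict_of_subset ?_ hae
      exact fun r hr => lt_of_le_of_lt hs hr.1
    have hmeas1 : AEMeasurable (fun r => ENNReal.ofReal (‖x' r‖^2)) ν := by
      have h0 : AEMeasurable (fun r => ‖x' r‖) ν := hint'.aestronglyMeasurable.norm.aemeasurable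
      exact (h0.pow_const 2).ennreal_ofReal
    have pt : ∀ᵐ r ∂ν, ENNReal.ofReal (ψ r) ≤
        ENNReal.ofReal (‖x' r‖^2) + ENNReal.ofReal (‖w r‖^2) := by
      refine haes.mono fun r hr => ?_
      refine le_trans (ENNReal.ofReal_le_ofReal hr) ENNReal.ofReal_add_le
    have e4a : (∫⁻ r in Ioc s t, ENNReal.ofReal (ψ r)) ≤
        ∫⁻ r in Ioc s t, (ENNReal.ofReal (‖x' r‖^2) + ENNReal.ofReal (‖w r‖^2)) :=
      lintegral_mono_ae pt
    have e4b : (∫⁻ r in Ioc s t, (ENNReal.ofReal (‖x' r‖^2) + ENNReal.ofReal (‖w r‖^2))) =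
        (∫⁻ r in Ioc s t, ENNReal.ofReal (‖x' r‖^2)) +
          ∫⁻ r in Ioc s t, ENNReal.ofReal (‖w r‖^2) := lintegral_add_left' hmeas1 _
    have hIsub : Ioc s t ⊆ Ici s := fun r hr => le_of_lt hr.1
    have e4c : (∫⁻ r in Ioc s t, ENNReal.ofReal (‖x' r‖^2)) ≤ T1 s :=
      lintegral_mono' (Measure.restrict_mono hIsub le_rfl) le_rfl
    have e4d : (∫⁻ r in Ioc s t, ENNReal.ofReal (‖w r‖^2)) ≤ T2 s :=
      lintegral_mono' (Measure.restrict_mono hIsub le_rfl) le_rfl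
    have e4 : (∫⁻ r in Ioc s t, ENNReal.ofReal (ψ r)) ≤ T1 s + T2 s :=
      le_trans e4a (le_trans (le_of_eq e4b) (add_le_add e4c e4d))
    have hfin : T1 s + T2 s ≠ ⊤ := by
      have b1 : T1 s ≤ T1 0 :=
        lintegral_mono' (Measure.restrict_mono (Ici_subset_Ici.2 hs) le_rfl) le_rfl
      have b2 : T2 s ≤ T2 0 :=
        lintegral_mono' (Measure.restrict_mono (Ici_subset_Ici.2 hs) le_rfl) le_rfl
      exact (ENNReal.add_lt_top.2 ⟨lt_of_le_of_lt b1 hen, lt_of_le_of_lt b2 hwfin⟩).ne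
    have e5 : (∫⁻ r in Ioc s t, ENNReal.ofReal (ψ r)).toReal ≤ (T1 s + T2 s).toReal :=
      ENNReal.toReal_mono hfin e4
    linarith [hid, e1, e2, e3, e5, hid.ge]

/-- Existence of the limit for a quasi-decreasing nonnegative function. -/
lemma tendsto_of_quasi_decreasing (f τ : ℝ → ℝ) (hf0 : ∀ t, 0 ≤ f t)
    (hτ : Tendsto τ atTop (𝓝 0))
    (hineq : ∀ s t : ℝ, 0 ≤ s → s ≤ t → f t ≤ f s + τ s) :
    ∃ L : ℝ, Tendsto f atTop (𝓝 L) := by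
  have hbddabove : IsBoundedUnder (· ≤ ·) atTop f := by
    refine ⟨f 0 + τ 0, eventually_map.2 ?_⟩
    filter_upwards [eventually_ge_atTop (0:ℝ)] with t ht
    exact hineq 0 t le_rfl ht
  have hbddbelow : IsBoundedUnder (· ≥ ·) atTop f :=
    ⟨0, eventually_map.2 (Eventually.of_forall hf0)⟩
  have hcob_le : IsCoboundedUnder (· ≤ ·) atTop f := hbddbelow.isCoboundedUnder_le
  have hcob_ge : IsCoboundedUnder (· ≥ ·) atTop f := hbddabove.isCoboundedUnder_ge
  have key : limsup f atTop ≤ liminf f atTop := by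
    refine le_of_forall_pos_le_add (fun ε hε => ?_)
    have hev : ∀ᶠ s in atTop, τ s < ε := hτ.eventually (gt_mem_nhds hε)
    have hev2 : ∀ᶠ s in atTop, limsup f atTop ≤ f s + ε := by
      filter_upwards [hev, eventually_ge_atTop (0:ℝ)] with s hsε hs0
      have : ∀ᶠ t in atTop, f t ≤ f s + ε := by
        filter_upwards [eventually_ge_atTop s] with t hts
        exact le_trans (hineq s t hs0 hts) (by linarith)
      exact limsup_le_of_le hcob_le this
    have : limsup f atTop - ε ≤ liminf f atTop := by
      refine le_liminf_of_le hcob_ge ?_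
      filter_upwards [hev2] with s hs
      linarith
    linarith
  exact ⟨liminf f atTop,
    tendsto_of_le_liminf_of_limsup_le le_rfl key hbddabove hbddbelow⟩

/-- Weak sequential compactness for bounded sequences lying in the closure
of the span of a countable family. -/
lemma weak_seq_compact (e : ℕ → H) (M : ℝ) (u : ℕ → H) (hu : ∀ n, ‖u n‖ ≤ M)
    (humem : ∀ n, u n ∈ (Submodule.span ℝ (Set.range e)).topologicalClosure) :
    ∃ (σ : ℕ → ℕ) (c : H), StrictMono σ ∧
      ∀ y : H, Tendsto (fun n => (⟪u (σ n), y⟫ : ℝ)) atTop (𝓝 (⟪c, y⟫ : ℝ)) := by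
  have hM0 : 0 ≤ M := le_trans (norm_nonneg _) (hu 0)
  set K : Submodule ℝ H := (Submodule.span ℝ (Set.range e)).topologicalClosure with hK
  haveI : CompleteSpace K :=
    (Submodule.span ℝ (Set.range e)).isClosed_topologicalClosure.completeSpace_coe
  -- extract a subsequence converging against every `e k`
  set S : Set (ℕ → ℝ) := univ.pi (fun k => Icc (-(M * ‖e k‖)) (M * ‖e k‖)) with hS
  have hScomp : IsCompact S := isCompact_univ_pi (fun k => isCompact_Icc)
  have hvS : ∀ n, (fun k => (⟪u n, e k⟫ : ℝ)) ∈ S := by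
    intro n
    rw [hS, mem_univ_pi]
    intro k
    have h1 : |(⟪u n, e k⟫ : ℝ)| ≤ M * ‖e k‖ :=
      le_trans (abs_real_inner_le_norm _ _)
        (mul_le_mul_of_nonneg_right (hu n) (norm_nonneg _))
    exact abs_le.1 h1
  obtain ⟨a, -, σ, hσ, hconv⟩ := hScomp.tendsto_subseq hvS
  have hcoord : ∀ k, Tendsto (fun n => (⟪u (σ n), e k⟫ : ℝ)) atTop (𝓝 (a k)) := by
    intro k
    exact (tendsto_pi_nhds.1 hconv) k
  -- convergence on the span
  have hspan : ∀ w ∈ Submodule.span ℝ (Set.range e),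
      ∃ L : ℝ, Tendsto (fun n => (⟪u (σ n), w⟫ : ℝ)) atTop (𝓝 L) := by
    intro w hw
    induction hw using Submodule.span_induction with
    | mem w hw =>
        obtain ⟨k, rfl⟩ := hw
        exact ⟨a k, hcoord k⟩
    | zero => exact ⟨0, by simp⟩
    | add w₁ w₂ _ _ h1 h2 =>
        obtain ⟨L1, hL1⟩ := h1
        obtain ⟨L2, hL2⟩ := h2
        exact ⟨L1 + L2, by simpa [inner_add_right] using hL1.add hL2⟩
    | smul r w _ h =>
        obtain ⟨L, hL⟩ := h
        exact ⟨r * L, by simpa [real_inner_smul_right] using hL.const_mul r⟩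
  -- convergence on the closure of the span
  have hclos : ∀ w : H, w ∈ K →
      ∃ L : ℝ, Tendsto (fun n => (⟪u (σ n), w⟫ : ℝ)) atTop (𝓝 L) := by
    intro w hw
    have hcau : CauchySeq (fun n => (⟪u (σ n), w⟫ : ℝ)) := by
      rw [Metric.cauchySeq_iff]
      intro ε hε
      have hss : w ∈ closure (Submodule.span ℝ (Set.range e) : Set H) := hw
      obtain ⟨w', hw'mem, hw'close⟩ :=
        Metric.mem_closure_iff.1 hss (ε / (4 * (M + 1))) (by positivity)
      obtain ⟨L, hL⟩ := hspan w' hw'mem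
      obtain ⟨N, hN⟩ := Metric.tendsto_atTop.1 hL (ε / 4) (by positivity)
      refine ⟨N, fun m hm n hn => ?_⟩
      have hd : ∀ j, |(⟪u (σ j), w⟫ : ℝ) - ⟪u (σ j), w'⟫| ≤ M * (ε / (4 * (M + 1))) := by
        intro j
        rw [← inner_sub_right]
        refine le_trans (abs_real_inner_le_norm _ _) ?_
        refine mul_le_mul (hu _) ?_ (norm_nonneg _) hM0
        rw [← dist_eq_norm]
        exact hw'close.le
      have hMee : M * (ε / (4 * (M + 1))) ≤ ε / 4 := by
        have hd0 : 0 ≤ ε / (4 * (M + 1)) := by positivity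
        have hde : ε / (4 * (M + 1)) * (4 * (M + 1)) = ε :=
          div_mul_cancel₀ _ (by positivity)
        nlinarith [hd0, hde]
      have h1 := hN m hm
      have h2 := hN n hn
      rw [Real.dist_eq] at h1 h2 ⊢
      have hdm := hd m
      have hdn := hd n
      have : |(⟪u (σ m), w⟫ : ℝ) - ⟪u (σ n), w⟫| ≤
          |(⟪u (σ m), w⟫ : ℝ) - ⟪u (σ m), w'⟫| + |(⟪u (σ m), w'⟫ : ℝ) - L| +
          (|(⟪u (σ n), w'⟫ : ℝ) - L| + |(⟪u (σ n), w⟫ : ℝ) - ⟪u (σ n), w'⟫|) := by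
        have := abs_sub_abs_le_abs_sub ((⟪u (σ m), w⟫ : ℝ)) ((⟪u (σ n), w⟫ : ℝ))
        calc |(⟪u (σ m), w⟫ : ℝ) - ⟪u (σ n), w⟫|
            = |((⟪u (σ m), w⟫ : ℝ) - ⟪u (σ m), w'⟫) + ((⟪u (σ m), w'⟫ : ℝ) - L) +
              ((L - ⟪u (σ n), w'⟫) + ((⟪u (σ n), w'⟫ : ℝ) - ⟪u (σ n), w⟫))| := by ring_nf
          _ ≤ _ := by
              refine le_trans (abs_add_le _ _) ?_
              refine add_le_add (abs_add_le _ _) ?_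
              refine le_trans (abs_add_le _ _) ?_
              rw [abs_sub_comm L _, abs_sub_comm _ (⟪u (σ n), w⟫ : ℝ)]
      linarith
    obtain ⟨L, hL⟩ := cauchySeq_tendsto_of_complete hcau
    exact ⟨L, hL⟩
  -- convergence against every vector
  have hall : ∀ y : H, ∃ L : ℝ, Tendsto (fun n => (⟪u (σ n), y⟫ : ℝ)) atTop (𝓝 L) := by
    intro y
    obtain ⟨ky, hky, oy, hoy, hdecomp⟩ := K.exists_add_mem_mem_orthogonal y
    obtain ⟨L, hL⟩ := hclos ky hky
    refine ⟨L, ?_⟩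
    have : ∀ n, (⟪u (σ n), y⟫ : ℝ) = ⟪u (σ n), ky⟫ := by
      intro n
      rw [hdecomp, inner_add_right,
        Submodule.inner_right_of_mem_orthogonal (humem (σ n)) hoy, add_zero]
    simpa [this] using hL
  -- build the weak limit via Riesz representation
  choose F hF using hall
  have hFadd : ∀ y₁ y₂, F (y₁ + y₂) = F y₁ + F y₂ := by
    intro y₁ y₂
    refine tendsto_nhds_unique (hF (y₁ + y₂)) ?_
    simpa [inner_add_right] using (hF y₁).add (hF y₂)
  have hFsmul : ∀ (r : ℝ) y, F (r • y) = r * F y := by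
    intro r y
    refine tendsto_nhds_unique (hF (r • y)) ?_
    simpa [real_inner_smul_right] using (hF y).const_mul r
  have hFbound : ∀ y, |F y| ≤ M * ‖y‖ := by
    intro y
    have h1 : Tendsto (fun n => |(⟪u (σ n), y⟫ : ℝ)|) atTop (𝓝 |F y|) := (hF y).abs
    refine le_of_tendsto h1 (Eventually.of_forall fun n => ?_)
    exact le_trans (abs_real_inner_le_norm _ _)
      (mul_le_mul_of_nonneg_right (hu _) (norm_nonneg _))
  set Flin : H →ₗ[ℝ] ℝ :=
    { toFun := F
      map_add' := hFadd
      map_smul' := hFsmul } with hFlin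
  set Fc : H →L[ℝ] ℝ := Flin.mkContinuous M (fun y => by
    rw [show ‖Flin y‖ = |F y| from Real.norm_eq_abs _]
    exact hFbound y) with hFc
  set c : H := (InnerProductSpace.toDual ℝ H).symm Fc with hc
  refine ⟨σ, c, hσ, fun y => ?_⟩
  have h1 : (⟪c, y⟫ : ℝ) = Fc y := by
    rw [hc]; exact InnerProductSpace.toDual_symm_apply
  have h2 : Fc y = F y := rfl
  rw [h1, h2]
  exact hF y

theorem sweeping_process_convergence'
    (C : ℝ → Set H) (Cinf : Set H)
    (hCinf : Cinf.Nonempty ∧ IsClosed Cinf ∧ Convex ℝ Cinf)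
    (mosco_a : ∀ (tn : ℕ → ℝ) (cn : ℕ → H) (c : H), Tendsto tn atTop atTop →
      (∀ n : ℕ, cn n ∈ C (tn n)) →
      (∀ y : H, Tendsto (fun n : ℕ => (⟪cn n, y⟫ : ℝ)) atTop (𝓝 (⟪c, y⟫ : ℝ))) →
      c ∈ Cinf)
    (hsel : ∀ z ∈ Cinf, ∃ ζ : ℝ → H, (∀ t : ℝ, 0 ≤ t → ζ t ∈ C t) ∧
      Tendsto ζ atTop (𝓝 z) ∧
      ∫⁻ t in Ici (0:ℝ), ENNReal.ofReal (‖ζ t - z‖ ^ 2) < ⊤)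
    (x x' : ℝ → H)
    (hint : ∀ T : ℝ, IntegrableOn x' (Icc 0 T))
    (hrep : ∀ t : ℝ, 0 ≤ t → x t = x 0 + ∫ s in (0:ℝ)..t, x' s)
    (hsol : ∀ᵐ t ∂(volume.restrict (Ioi (0:ℝ))),
      x t ∈ C t ∧ ∀ y ∈ C t, (⟪-x' t, y - x t⟫ : ℝ) ≤ 0)
    (henergy : ∫⁻ t in Ici (0:ℝ), ENNReal.ofReal (‖x' t‖ ^ 2) < ⊤) :
    ∃ xlim ∈ Cinf, ∀ y : H, Tendsto (fun t : ℝ => (⟪x t, y⟫ : ℝ)) atTop (𝓝 (⟪xlim, y⟫ : ℝ)) := by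
  have hxc : ContinuousOn x (Ici 0) := cont_of_locac hint hrep
  obtain ⟨z₀, hz₀⟩ := hCinf.1
  -- Lyapunov quasi-decrease for every z ∈ Cinf
  have hlyap : ∀ z ∈ Cinf, ∃ τ : ℝ → ℝ, (∀ s, 0 ≤ τ s) ∧ Tendsto τ atTop (𝓝 0) ∧
      ∀ s t : ℝ, 0 ≤ s → s ≤ t → ‖x t - z‖^2 ≤ ‖x s - z‖^2 + τ s := by
    intro z hz
    obtain ⟨ζ, hζmem, hζtend, hζint⟩ := hsel z hz
    refine lyapunov hint hrep z (fun r => ζ r - z) ?_ henergy hζint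
    filter_upwards [hsol, ae_restrict_mem measurableSet_Ioi] with r hr hrmem
    obtain ⟨hxmem, hnormal⟩ := hr
    have hζr : ζ r ∈ C r := hζmem r (le_of_lt hrmem)
    have h1 : (⟪-x' r, ζ r - x r⟫ : ℝ) ≤ 0 := hnormal (ζ r) hζr
    have h2 : (⟪x' r, x r - z⟫ : ℝ) ≤ ⟪x' r, ζ r - z⟫ := by
      have h3 : (0:ℝ) ≤ ⟪x' r, ζ r - x r⟫ := by
        rw [inner_neg_left] at h1; linarith
      have h4 : (⟪x' r, ζ r - z⟫ : ℝ) - ⟪x' r, x r - z⟫ = ⟪x' r, ζ r - x r⟫ := by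
        rw [← inner_sub_right]; congr 1; abel
      linarith
    have h5 : (⟪x' r, ζ r - z⟫ : ℝ) ≤ ‖x' r‖ * ‖ζ r - z‖ := real_inner_le_norm _ _
    nlinarith [sq_nonneg (‖x' r‖ - ‖ζ r - z‖)]
  -- existence of the Opial limits
  have hL : ∀ z ∈ Cinf, ∃ L : ℝ, Tendsto (fun t => ‖x t - z‖^2) atTop (𝓝 L) := by
    intro z hz
    obtain ⟨τ, hτ0, hτ, hineq⟩ := hlyap z hz
    exact tendsto_of_quasi_decreasing _ τ (fun t => sq_nonneg _) hτ hineq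
  -- global bound on the trajectory
  obtain ⟨τ₀, hτ₀0, hτ₀tend, hineq₀⟩ := hlyap z₀ hz₀
  set M : ℝ := Real.sqrt (‖x 0 - z₀‖^2 + τ₀ 0) + ‖z₀‖ with hM
  have hMb : ∀ t : ℝ, 0 ≤ t → ‖x t‖ ≤ M := by
    intro t ht
    have h1 : ‖x t - z₀‖^2 ≤ ‖x 0 - z₀‖^2 + τ₀ 0 := hineq₀ 0 t le_rfl ht
    have h2 : ‖x t - z₀‖ ≤ Real.sqrt (‖x 0 - z₀‖^2 + τ₀ 0) := by
      rw [show ‖x t - z₀‖ = Real.sqrt (‖x t - z₀‖^2) from (Real.sqrt_sq (norm_nonneg _)).symm]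
      exact Real.sqrt_le_sqrt h1
    calc ‖x t‖ = ‖(x t - z₀) + z₀‖ := by rw [sub_add_cancel]
      _ ≤ ‖x t - z₀‖ + ‖z₀‖ := norm_add_le _ _
      _ ≤ M := by rw [hM]; linarith
  -- a countable family whose closed span contains the trajectory
  set q : ℕ → ℝ := fun n => |((((Denumerable.eqv ℚ).symm n : ℚ)) : ℝ)| with hq
  set e : ℕ → H := fun n => x (q n) with he
  set K : Submodule ℝ H := (Submodule.span ℝ (Set.range e)).topologicalClosure with hKdef
  have htraj : ∀ t : ℝ, 0 ≤ t → x t ∈ K := by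
    intro t ht
    have hdense : t ∈ closure (Set.range ((↑) : ℚ → ℝ)) := Rat.denseRange_cast t
    obtain ⟨rs, hrs_mem, hrs_tend⟩ := mem_closure_iff_seq_limit.1 hdense
    have hbq : ∀ k, ∃ m, |rs k| = q m := by
      intro k
      obtain ⟨rk, hrk⟩ := hrs_mem k
      refine ⟨(Denumerable.eqv ℚ) rk, ?_⟩
      rw [hq]
      simp only [Equiv.symm_apply_apply]
      rw [hrk]
    have hbtend : Tendsto (fun k => |rs k|) atTop (𝓝 t) := by
      have := hrs_tend.abs
      rwa [abs_of_nonneg ht] at this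
    have hxb : Tendsto (fun k => x (|rs k|)) atTop (𝓝 (x t)) := by
      refine (hxc t ht).tendsto.comp ?_
      exact tendsto_nhdsWithin_of_tendsto_nhds_of_eventually_within _ hbtend
        (Eventually.of_forall (fun k => mem_Ici.2 (abs_nonneg _)))
    have hmem2 : ∀ k, x (|rs k|) ∈ (K : Set H) := by
      intro k
      obtain ⟨m, hm⟩ := hbq k
      rw [hm]
      exact Submodule.le_topologicalClosure _ (Submodule.subset_span ⟨m, rfl⟩)
    have hcl : IsClosed (K : Set H) := Submodule.isClosed_topologicalClosure _
    exact hcl.mem_of_tendsto hxb (Eventually.of_forall hmem2)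
  -- the set of good times
  set Good : Set ℝ :=
    {t | 0 < t ∧ x t ∈ C t ∧ ∀ y ∈ C t, (⟪-x' t, y - x t⟫ : ℝ) ≤ 0} with hGood
  have hGoodDense : ∀ a b : ℝ, 0 ≤ a → a < b → (Good ∩ Ioo a b).Nonempty := by
    intro a b ha hab
    by_contra hcon
    rw [not_nonempty_iff_eq_empty] at hcon
    have hbad : volume ({t : ℝ |
        ¬(x t ∈ C t ∧ ∀ y ∈ C t, (⟪-x' t, y - x t⟫ : ℝ) ≤ 0)} ∩ Ioi 0) = 0 := by
      have := ae_iff.1 hsol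
      rwa [Measure.restrict_apply' measurableSet_Ioi] at this
    have hsub : Ioo a b ⊆ {t : ℝ |
        ¬(x t ∈ C t ∧ ∀ y ∈ C t, (⟪-x' t, y - x t⟫ : ℝ) ≤ 0)} ∩ Ioi 0 := by
      intro t htab
      have ht0 : 0 < t := lt_of_le_of_lt ha htab.1
      have htG : t ∉ Good := by
        intro hmem
        have : t ∈ Good ∩ Ioo a b := ⟨hmem, htab⟩
        rw [hcon] at this
        exact this
      refine ⟨?_, ht0⟩
      intro hP
      exact htG ⟨ht0, hP⟩
    have h1 : volume (Ioo a b) = 0 :=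
      le_antisymm (le_trans (measure_mono hsub) (le_of_eq hbad)) (zero_le)
    rw [Real.volume_Ioo, ENNReal.ofReal_eq_zero, sub_nonpos] at h1
    exact absurd h1 (not_le.2 hab)
  -- cluster extraction machinery
  have hcluster : ∀ s : ℕ → ℝ, (∀ n, s n ∈ Good) → Tendsto s atTop atTop →
      ∃ c ∈ Cinf, ∃ σ : ℕ → ℕ, StrictMono σ ∧
        ∀ y : H, Tendsto (fun n => (⟪x (s (σ n)), y⟫ : ℝ)) atTop (𝓝 (⟪c, y⟫ : ℝ)) := by
    intro s hsG hstend
    have hs0 : ∀ n, (0:ℝ) ≤ s n := fun n => ((hsG n).1).le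
    obtain ⟨σ, c, hσ, hcv⟩ := weak_seq_compact e M (fun n => x (s n))
      (fun n => hMb _ (hs0 n)) (fun n => htraj _ (hs0 n))
    refine ⟨c, ?_, σ, hσ, fun y => hcv y⟩
    exact mosco_a (fun n => s (σ n)) (fun n => x (s (σ n))) c
      (hstend.comp hσ.tendsto_atTop) (fun n => (hsG (σ n)).2.1) (fun y => hcv y)
  -- the base sequence of good times
  have hbase : ∀ n : ℕ, (Good ∩ Ioo (n:ℝ) ((n:ℝ)+1)).Nonempty :=
    fun n => hGoodDense _ _ (Nat.cast_nonneg n) (by linarith)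
  choose t0 ht0 using hbase
  have ht0G : ∀ n, t0 n ∈ Good := fun n => (ht0 n).1
  have ht0tend : Tendsto t0 atTop atTop :=
    tendsto_atTop_mono (fun n => ((ht0 n).2.1).le) tendsto_natCast_atTop_atTop
  obtain ⟨c, hcCinf, σ, hσ, hcv⟩ := hcluster t0 ht0G ht0tend
  refine ⟨c, hcCinf, fun y => ?_⟩
  by_contra hcon
  rw [Metric.tendsto_atTop] at hcon
  push_neg at hcon
  obtain ⟨ε, hε, hfreq⟩ := hcon
  -- choose far-away bad times inside the good set
  have hpick : ∀ n : ℕ, ∃ s' : ℝ, s' ∈ Good ∧ (n:ℝ) ≤ s' ∧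
      ε/2 ≤ dist (⟪x s', y⟫ : ℝ) (⟪c, y⟫ : ℝ) := by
    intro n
    obtain ⟨sb, hsb, hsbd⟩ := hfreq (max (n:ℝ) 0)
    have hsb0 : (0:ℝ) ≤ sb := le_trans (le_max_right _ _) hsb
    have hct : ContinuousWithinAt (fun r => (⟪x r, y⟫ : ℝ)) (Ici 0) sb :=
      (hxc sb hsb0).inner continuousWithinAt_const
    rw [Metric.continuousWithinAt_iff] at hct
    obtain ⟨δ, hδ, hδprop⟩ := hct (ε/2) (by positivity)
    have hmin : (0:ℝ) < min δ 1 := lt_min hδ one_pos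
    obtain ⟨s', hs'G, hs'mem⟩ := hGoodDense sb (sb + min δ 1) hsb0 (by linarith)
    have hs'0 : (0:ℝ) ≤ s' := hs'G.1.le
    have hclose : dist s' sb < δ := by
      rw [Real.dist_eq, abs_of_nonneg (by linarith [hs'mem.1] : (0:ℝ) ≤ s' - sb)]
      have := hs'mem.2
      have h2 : s' - sb < min δ 1 := by linarith
      exact lt_of_lt_of_le h2 (min_le_left _ _)
    have hd1 : dist (⟪x s', y⟫ : ℝ) (⟪x sb, y⟫ : ℝ) < ε/2 := hδprop hs'0 hclose
    refine ⟨s', hs'G, le_trans (le_max_left _ _) (le_trans hsb hs'mem.1.le), ?_⟩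
    have := dist_triangle (⟪x sb, y⟫ : ℝ) (⟪x s', y⟫ : ℝ) (⟪c, y⟫ : ℝ)
    have h3 := hsbd
    rw [dist_comm] at hd1
    linarith
  choose s' hs'G hs'ge hs'far using hpick
  have hs'tend : Tendsto s' atTop atTop :=
    tendsto_atTop_mono hs'ge tendsto_natCast_atTop_atTop
  obtain ⟨c', hc'Cinf, σ', hσ', hcv'⟩ := hcluster s' hs'G hs'tend
  -- c ≠ c'
  have hne : c ≠ c' := by
    intro hcc
    have h1 : Tendsto (fun n => dist (⟪x (s' (σ' n)), y⟫ : ℝ) (⟪c, y⟫ : ℝ)) atTop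
        (𝓝 (dist (⟪c', y⟫ : ℝ) (⟪c, y⟫ : ℝ))) := (hcv' y).dist tendsto_const_nhds
    have h2 : ε/2 ≤ dist (⟪c', y⟫ : ℝ) (⟪c, y⟫ : ℝ) :=
      ge_of_tendsto h1 (Eventually.of_forall fun n => hs'far (σ' n))
    rw [hcc, dist_self] at h2
    linarith
  -- Opial's argument
  obtain ⟨Lc, hLc⟩ := hL c hcCinf
  obtain ⟨Lc', hLc'⟩ := hL c' hc'Cinf
  have opial : ∀ (s0 : ℕ → ℝ) (d d' : H) (Ld' : ℝ), Tendsto s0 atTop atTop →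
      (∀ yy : H, Tendsto (fun n => (⟪x (s0 n), yy⟫ : ℝ)) atTop (𝓝 (⟪d, yy⟫ : ℝ))) →
      Tendsto (fun t => ‖x t - d'‖^2) atTop (𝓝 Ld') →
      ∀ Ld : ℝ, Tendsto (fun t => ‖x t - d‖^2) atTop (𝓝 Ld) →
      Ld' = Ld + ‖d - d'‖^2 := by
    intro s0 d d' Ld' hs0tend hwk hLd' Ld hLd
    have k1 : Tendsto (fun n => ‖x (s0 n) - d'‖^2) atTop (𝓝 Ld') := hLd'.comp hs0tend
    have k2 : Tendsto (fun n => ‖x (s0 n) - d‖^2) atTop (𝓝 Ld) := hLd.comp hs0tend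
    have k3 : Tendsto (fun n => (⟪x (s0 n), d - d'⟫ : ℝ)) atTop (𝓝 (⟪d, d - d'⟫ : ℝ)) :=
      hwk (d - d')
    have k4 : Tendsto (fun n => ‖x (s0 n) - d‖^2 +
        (2 * ((⟪x (s0 n), d - d'⟫ : ℝ) - ⟪d, d - d'⟫) + ‖d - d'‖^2)) atTop
        (𝓝 (Ld + (2 * ((⟪d, d - d'⟫ : ℝ) - ⟪d, d - d'⟫) + ‖d - d'‖^2))) :=
      k2.add (((k3.sub tendsto_const_nhds).const_mul 2).add tendsto_const_nhds)
    have k5 : (fun n => ‖x (s0 n) - d'‖^2) = fun n => ‖x (s0 n) - d‖^2 +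
        (2 * ((⟪x (s0 n), d - d'⟫ : ℝ) - ⟪d, d - d'⟫) + ‖d - d'‖^2) := by
      funext n
      have hdc : x (s0 n) - d' = (x (s0 n) - d) + (d - d') := by abel
      rw [hdc, norm_add_sq_real, inner_sub_left]
      ring
    rw [k5] at k1
    have k6 := tendsto_nhds_unique k1 k4
    rw [sub_self, mul_zero, zero_add] at k6
    exact k6
  have hA : Lc' = Lc + ‖c - c'‖^2 :=
    opial (fun n => t0 (σ n)) c c' Lc' (ht0tend.comp hσ.tendsto_atTop) hcv hLc' Lc hLc
  have hB : Lc = Lc' + ‖c' - c‖^2 :=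
    opial (fun n => s' (σ' n)) c' c Lc (hs'tend.comp hσ'.tendsto_atTop) hcv' hLc Lc' hLc'
  have hnorm : ‖c - c'‖^2 = 0 := by
    rw [norm_sub_rev c' c] at hB
    linarith
  have : c - c' = 0 := by
    rw [pow_eq_zero_iff (by norm_num : 2 ≠ 0)] at hnorm
    exact norm_eq_zero.1 hnorm
  exact hne (sub_eq_zero.1 this)


end AuxSweeping

/-- sweeping process `ẋ(t) + N_{C(t)}(x(t)) ∋ 0` with `C(t)` Mosco converging
to `C∞`, a square-summable selection condition, and finite energy: the trajectory
converges weakly to a point of `C∞`. -/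
theorem sweeping_process_convergence
    (C : ℝ → Set H) (Cinf : Set H)
    (hC : ∀ t : ℝ, 0 ≤ t → (C t).Nonempty ∧ IsClosed (C t) ∧ Convex ℝ (C t))
    (hCinf : Cinf.Nonempty ∧ IsClosed Cinf ∧ Convex ℝ Cinf)
    -- Mosco convergence, part (a): weak sequential upper limit
    (mosco_a : ∀ (tn : ℕ → ℝ) (cn : ℕ → H) (c : H), Tendsto tn atTop atTop →
      (∀ n : ℕ, cn n ∈ C (tn n)) →
      (∀ y : H, Tendsto (fun n : ℕ => (⟪cn n, y⟫ : ℝ)) atTop (𝓝 (⟪c, y⟫ : ℝ))) →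
      c ∈ Cinf)
    -- Mosco convergence, part (b): strong approximation of points of `C∞`
    (mosco_b : ∀ z ∈ Cinf, ∃ ζ : ℝ → H, (∀ t : ℝ, 0 ≤ t → ζ t ∈ C t) ∧
      Tendsto ζ atTop (𝓝 z))
    -- square-summable selections
    (hsel : ∀ z ∈ Cinf, ∃ ζ : ℝ → H, (∀ t : ℝ, 0 ≤ t → ζ t ∈ C t) ∧
      Tendsto ζ atTop (𝓝 z) ∧
      ∫⁻ t in Ici (0:ℝ), ENNReal.ofReal (‖ζ t - z‖ ^ 2) < ⊤)
    (x x' : ℝ → H) (hx : LocAC x x')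
    (hsol : ∀ᵐ t ∂(volume.restrict (Ioi (0:ℝ))),
      x t ∈ C t ∧ ∀ y ∈ C t, (⟪-x' t, y - x t⟫ : ℝ) ≤ 0)
    (henergy : ∫⁻ t in Ici (0:ℝ), ENNReal.ofReal (‖x' t‖ ^ 2) < ⊤) :
    ∃ xlim ∈ Cinf, WeakConv x xlim := by
  obtain ⟨hint, hrep⟩ := hx
  obtain ⟨xlim, h1, h2⟩ := sweeping_process_convergence' C Cinf hCinf mosco_a hsel
    x x' hint hrep hsol henergy
  exact ⟨xlim, h1, h2⟩
end

section
/- Assume (H_Ψ): Ψ : H → ℝ ∪ {+∞} is a closed convex proper function with inf_H Ψ = 0 and C = argmin Ψ ≠ ∅; and (H_Φ): Φ : H → ℝ ∪ {+∞} is a closed convex proper function with inf_C Φ = 0 and argmin_C Φ ≠ ∅. Define ω(ε) = inf_{x∈H} (Ψ(x) + εΦ(x)) for ε ≥ 0. Then: (a) ω is nonpositive, nonincreasing and concave on [0,+∞). If moreover the function Ψ + Φ is coercive, then: (b) for every ε ∈ [0,1], ω(ε) > −∞ and the infimum defining ω(ε) is attained; (c) lim_{ε→0⁺} ω(ε)/ε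 = 0, i.e., the asymptotic expansion min_H(Ψ + εΦ) = min_H Ψ + ε·min_C Φ + o(ε) holds as ε → 0. -/
open MeasureTheory Set Filter Topology ENNReal RealInnerProductSpace

variable {H : Type*} [NormedAddCommGroup H] [InnerProductSpace ℝ H] [CompleteSpace H]

section Helpers



-- from /tmp/help1.lean

lemma emul_ne_bot {e : ℝ} (he : 0 ≤ e) {b : EReal} (hb : b ≠ ⊥) : (e:EReal) * b ≠ ⊥ := by
  rcases he.eq_or_lt with rfl | he'
  · simp
  · induction b with
    | bot => exact absurd rfl hb
    | coe r => simp [← EReal.coe_mul]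
    | top => rw [EReal.coe_mul_top_of_pos he']; simp

lemma emul_ne_top {e : ℝ} (he : 0 ≤ e) {b : EReal} (hb : b ≠ ⊤) : (e:EReal) * b ≠ ⊤ := by
  rcases he.eq_or_lt with rfl | he'
  · simp
  · induction b with
    | bot => rw [EReal.coe_mul_bot_of_pos he']; simp
    | coe r => simp [← EReal.coe_mul]
    | top => exact absurd rfl hb

lemma edistrib {e : ℝ} (he : 0 ≤ e) {a b : EReal} (ha : a ≠ ⊥) (hb : b ≠ ⊥) :
    (e:EReal) * (a + b) = (e:EReal)*a + (e:EReal)*b := by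
  rcases he.eq_or_lt with rfl | he'
  · simp
  · induction a with
    | bot => exact absurd rfl ha
    | coe r =>
      induction b with
      | bot => exact absurd rfl hb
      | coe s => norm_cast; ring
      | top =>
        rw [EReal.add_top_of_ne_bot (by simp), EReal.coe_mul_top_of_pos he',
          EReal.add_top_of_ne_bot (by simp [← EReal.coe_mul])]
    | top =>
      rw [EReal.top_add_of_ne_bot hb, EReal.coe_mul_top_of_pos he',
        EReal.top_add_of_ne_bot (emul_ne_bot he'.le hb)]

lemma econt_mul {e : ℝ} (he : 0 < e) : Continuous (fun z : EReal => (e:EReal) * z) := by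
  rw [continuous_iff_continuousAt]
  intro z
  have : ContinuousAt (fun p : EReal × EReal => p.1 * p.2) ((e:EReal), z) :=
    EReal.continuousAt_mul (Or.inl (by simp; exact_mod_cast he.ne')) (Or.inl (by simp; exact_mod_cast he.ne')) (by simp) (Or.inl (by simp))
  exact this.comp (Continuous.continuousAt (by fun_prop))

lemma elsc_mul {e : ℝ} (he : 0 ≤ e) {α : Type*} [TopologicalSpace α] {g : α → EReal} (hg : LowerSemicontinuous g) :
    LowerSemicontinuous (fun x => (e:EReal) * g x) := by
  rcases he.eq_or_lt with rfl | he'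
  · simp only [EReal.coe_zero, zero_mul]; exact lowerSemicontinuous_const
  · exact (econt_mul he').comp_lowerSemicontinuous hg
      (fun a b hab => mul_le_mul_of_nonneg_left hab (by exact_mod_cast he))



-- from /tmp/help2.lean

lemma ele_self_mul {t : EReal} (ht : t ≤ 0) {c : ℝ} (hc : 0 ≤ c) (hc1 : c ≤ 1) :
    t ≤ (c:EReal) * t := by
  induction t with
  | bot =>
    rcases hc.eq_or_lt with rfl | hc'
    · simp
    · rw [EReal.coe_mul_bot_of_pos hc']
  | coe r =>
    have hr : r ≤ 0 := by exact_mod_cast ht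
    rw [← EReal.coe_mul, EReal.coe_le_coe_iff]
    nlinarith
  | top => simp at ht

lemma ebot_of_forall {x : EReal} (h : ∀ n : ℕ, x ≤ ((-(n:ℝ) : ℝ) : EReal)) : x = ⊥ := by
  induction x with
  | bot => rfl
  | coe r =>
    exfalso
    have := h (⌈|r|⌉₊ + 1)
    rw [EReal.coe_le_coe_iff] at this
    have h2 : |r| ≤ (⌈|r|⌉₊ : ℝ) := Nat.le_ceil _
    have h3 : r ≤ |r| := le_abs_self r
    push_cast at this
    linarith [neg_abs_le r]
  | top =>
    exfalso
    have := h 0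
    simp at this

lemma ele_of_forall {x : EReal} {l : ℝ}
    (h : ∀ n : ℕ, x ≤ (((l + 1/(n+1)) : ℝ) : EReal)) : x ≤ (l : EReal) := by
  induction x with
  | bot => exact bot_le
  | coe r =>
    rw [EReal.coe_le_coe_iff]
    refine le_of_forall_pos_le_add fun ε hε => ?_
    obtain ⟨n, hn⟩ := exists_nat_one_div_lt hε
    have := h n
    rw [EReal.coe_le_coe_iff] at this
    linarith
  | top =>
    exfalso
    have := h 0
    exact EReal.coe_ne_top _ (top_le_iff.1 this)

lemma sublevel_convex {E : Type*} [AddCommGroup E] [Module ℝ E] {f : E → EReal}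
    (hf : EConvex f) (c : EReal) : Convex ℝ {x | f x ≤ c} := by
  intro x hx y hy a b ha hb hab
  have h1 : f (a • x + b • y) ≤ (a:EReal) * f x + (b:EReal) * f y := hf x y a b ha hb hab
  have h2 : (a:EReal) * f x ≤ (a:EReal) * c := mul_le_mul_of_nonneg_left hx (by exact_mod_cast ha)
  have h3 : (b:EReal) * f y ≤ (b:EReal) * c := mul_le_mul_of_nonneg_left hy (by exact_mod_cast hb)
  have h4 : (a:EReal) * c + (b:EReal) * c = c := by
    rw [← EReal.right_distrib_of_nonneg (by exact_mod_cast ha) (by exact_mod_cast hb)]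
    have : ((a:EReal) + (b:EReal)) = ((1:ℝ) : EReal) := by norm_cast
    rw [this]; norm_num
  calc f (a • x + b • y) ≤ (a:EReal) * f x + (b:EReal) * f y := h1
    _ ≤ (a:EReal) * c + (b:EReal) * c := add_le_add h2 h3
    _ = c := h4



-- from /tmp/help3.lean
lemma keyineq {lam mu e1 e2 : ℝ} (hlam : 0 ≤ lam) (hmu : 0 ≤ mu) (hsum : lam + mu = 1)
    (he1 : 0 ≤ e1) (he2 : 0 ≤ e2) {a b : EReal} (ha : a ≠ ⊥) (hb : b ≠ ⊥) :
    (lam:EReal) * (a + (e1:EReal) * b) + (mu:EReal) * (a + (e2:EReal) * b) ≤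
      a + ((lam * e1 + mu * e2 : ℝ) : EReal) * b := by
  have hc : 0 ≤ lam * e1 + mu * e2 := by positivity
  induction a with
  | bot => exact absurd rfl ha
  | coe ar =>
    induction b with
    | bot => exact absurd rfl hb
    | coe br =>
      apply le_of_eq
      norm_cast
      linear_combination ar * hsum
    | top =>
      rcases hc.eq_or_lt with hc0 | hcpos
      · -- lam*e1 = 0 and mu*e2 = 0
        have h1 : lam * e1 = 0 := by nlinarith [mul_nonneg hlam he1, mul_nonneg hmu he2]
        have h2 : mu * e2 = 0 := by nlinarith [mul_nonneg hlam he1, mul_nonneg hmu he2]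
        have t1 : (lam:EReal) * ((ar:EReal) + (e1:EReal) * ⊤) = ((lam * ar : ℝ) : EReal) := by
          rcases mul_eq_zero.1 h1 with h | h
          · subst h; simp
          · subst h; norm_num
        have t2 : (mu:EReal) * ((ar:EReal) + (e2:EReal) * ⊤) = ((mu * ar : ℝ) : EReal) := by
          rcases mul_eq_zero.1 h2 with h | h
          · subst h; simp
          · subst h; norm_num
        rw [t1, t2, ← hc0]
        norm_num
        apply le_of_eq
        norm_cast
        linear_combination ar * hsum
      · have : ((lam * e1 + mu * e2 : ℝ) : EReal) * ⊤ = ⊤ := EReal.coe_mul_top_of_pos hcpos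
        rw [this, EReal.add_top_of_ne_bot (EReal.coe_ne_bot _)]
        exact le_top
  | top =>
    rw [EReal.top_add_of_ne_bot (emul_ne_bot hc hb)]
    exact le_top



-- from /tmp/help4.lean


lemma nested_inter (K : ℕ → Set H) (hne : ∀ n, (K n).Nonempty) (hconv : ∀ n, Convex ℝ (K n))
    (hcl : ∀ n, IsClosed (K n)) (hmono : ∀ n, K (n+1) ⊆ K n)
    (R : ℝ) (hbd : ∀ n, ∀ x ∈ K n, ‖x‖ ≤ R) :
    (⋂ n, K n).Nonempty := by
  have hanti : Antitone K := antitone_nat_of_succ_le hmono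
  have hproj : ∀ n, ∃ v ∈ K n, ‖(0:H) - v‖ = ⨅ w : K n, ‖(0:H) - (w:H)‖ :=
    fun n => exists_norm_eq_iInf_of_complete_convex (hne n) (hcl n).isComplete (hconv n) 0
  choose p hp hpn using hproj
  set d : ℕ → ℝ := fun n => ‖p n‖ with hd
  have hdnonneg : ∀ n, 0 ≤ d n := fun n => norm_nonneg _
  have hdle : ∀ n, ∀ x ∈ K n, d n ≤ ‖x‖ := by
    intro n x hx
    show ‖p n‖ ≤ ‖x‖
    have h1 : ‖p n‖ = ⨅ w : K n, ‖(0:H) - (w:H)‖ := by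
      rw [← hpn n, zero_sub, norm_neg]
    rw [h1]
    have : (⨅ w : K n, ‖(0:H) - (w:H)‖) ≤ ‖(0:H) - x‖ :=
      ciInf_le ⟨0, forall_mem_range.2 fun w => norm_nonneg _⟩ (⟨x, hx⟩ : K n)
    simpa using this
  have hdmono : Monotone d := by
    intro n m hnm
    exact hdle n (p m) (hanti hnm (hp m))
  have hdR : ∀ n, d n ≤ R := fun n => hbd n (p n) (hp n)
  set D : ℝ := ⨆ n, d n with hD
  have hbddA : BddAbove (range d) := ⟨R, forall_mem_range.2 hdR⟩
  have hdD : ∀ n, d n ≤ D := fun n => le_ciSup hbddA n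
  have htend : Tendsto d atTop (𝓝 D) := tendsto_atTop_ciSup hdmono hbddA
  -- key quadratic estimate
  have haux : ∀ n m : ℕ, n ≤ m → ‖p n - p m‖^2 ≤ 2 * (d m^2 - d n^2) := by
    intro n m hnm
    have hmid : (1/2 : ℝ) • p n + (1/2 : ℝ) • p m ∈ K n :=
      hconv n (hp n) (hanti hnm (hp m)) (by norm_num) (by norm_num) (by norm_num)
    have h1 : d n ≤ ‖(1/2 : ℝ) • p n + (1/2 : ℝ) • p m‖ := hdle n _ hmid
    have h2 : ‖(1/2 : ℝ) • p n + (1/2 : ℝ) • p m‖ = (1/2) * ‖p n + p m‖ := by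
      rw [← smul_add, norm_smul]
      simp
    have hpar : ‖p n + p m‖ * ‖p n + p m‖ + ‖p n - p m‖ * ‖p n - p m‖ =
        2 * (‖p n‖ * ‖p n‖ + ‖p m‖ * ‖p m‖) := by
      have := parallelogram_law_with_norm ℝ (p n) (p m); simp only [sq] at this; exact this
    have h3 : 2 * d n ≤ ‖p n + p m‖ := by rw [h2] at h1; linarith
    have h4 : d m ≤ d m := le_refl _
    have hdn : d n = ‖p n‖ := rfl
    have hdm : d m = ‖p m‖ := rfl
    nlinarith [norm_nonneg (p n + p m), hdnonneg n, hdnonneg m]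
  set b : ℕ → ℝ := fun N => Real.sqrt (2 * (D^2 - d N^2)) with hb
  have hkey : ∀ n m N : ℕ, N ≤ n → N ≤ m → dist (p n) (p m) ≤ b N := by
    have main : ∀ n m N : ℕ, N ≤ n → N ≤ m → n ≤ m → dist (p n) (p m) ≤ b N := by
      intro n m N hNn hNm hnm
      rw [dist_eq_norm]
      have hle : ‖p n - p m‖^2 ≤ 2*(D^2 - d N^2) := by
        have h5 := haux n m hnm
        nlinarith [hdD m, hdmono hNn, hdnonneg N, hdnonneg n, hdnonneg m, hdD n]
      calc ‖p n - p m‖ = Real.sqrt (‖p n - p m‖^2) := (Real.sqrt_sq (norm_nonneg _)).symm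
        _ ≤ Real.sqrt (2*(D^2 - d N^2)) := Real.sqrt_le_sqrt hle
    intro n m N hNn hNm
    rcases le_total n m with h | h
    · exact main n m N hNn hNm h
    · rw [dist_comm]; exact main m n N hNm hNn h
  have hb0 : Tendsto b atTop (𝓝 0) := by
    have h1 : Tendsto (fun N => 2 * (D^2 - d N^2)) atTop (𝓝 (2 * (D^2 - D^2))) :=
      (tendsto_const_nhds.mul ((tendsto_const_nhds.sub ((htend.pow 2)))))
    have h2 : Tendsto (fun N => Real.sqrt (2 * (D^2 - d N^2))) atTop (𝓝 (Real.sqrt (2 * (D^2 - D^2)))) :=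
      (Real.continuous_sqrt.tendsto _).comp h1
    have h3 : Real.sqrt (2 * (D^2 - D^2)) = 0 := by simp
    rw [h3] at h2
    exact h2
  have hcauchy : CauchySeq p := cauchySeq_of_le_tendsto_0 b hkey hb0
  obtain ⟨x, hx⟩ := cauchySeq_tendsto_of_complete hcauchy
  refine ⟨x, mem_iInter.2 fun n => ?_⟩
  apply (hcl n).mem_of_tendsto hx
  filter_upwards [eventually_ge_atTop n] with m hm
  exact hanti hm (hp m)



lemma attains_aux (f : H → EReal) (hlsc : LowerSemicontinuous f) (hconv : EConvex f)
    (b : ℕ → ℝ) (hbanti : Antitone b) (hlt : ∀ n, ∃ x, f x < ((b n : ℝ) : EReal))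
    (R : ℝ) (hball : ∀ (n : ℕ) (x : H), f x ≤ ((b n : ℝ) : EReal) → ‖x‖ ≤ R) :
    ∃ x : H, ∀ n : ℕ, f x ≤ ((b n : ℝ) : EReal) := by
  set K : ℕ → Set H := fun n => Metric.closedBall (0:H) R ∩ {x | f x ≤ ((b n : ℝ) : EReal)}
    with hK
  have hne : ∀ n, (K n).Nonempty := by
    intro n
    obtain ⟨x, hx⟩ := hlt n
    exact ⟨x, by
      rw [hK]
      exact ⟨Metric.mem_closedBall.2 (by simpa using hball n x hx.le), hx.le⟩⟩
  have hconvK : ∀ n, Convex ℝ (K n) :=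
    fun n => (convex_closedBall (0:H) R).inter (sublevel_convex hconv _)
  have hclK : ∀ n, IsClosed (K n) :=
    fun n => Metric.isClosed_closedBall.inter (hlsc.isClosed_preimage _)
  have hmonoK : ∀ n, K (n+1) ⊆ K n := by
    intro n x hx
    exact ⟨hx.1, le_trans hx.2 (EReal.coe_le_coe_iff.2 (hbanti (Nat.le_succ n)))⟩
  have hbdK : ∀ n, ∀ x ∈ K n, ‖x‖ ≤ R := by
    intro n x hx
    simpa [mem_closedBall_zero_iff] using hx.1
  obtain ⟨x, hx⟩ := nested_inter K hne hconvK hclK hmonoK R hbdK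
  exact ⟨x, fun n => (mem_iInter.1 hx n).2⟩

lemma attains_min (f : H → EReal) (hlsc : LowerSemicontinuous f)
    (hconv : EConvex f) (hbot : ∀ x, f x ≠ ⊥) (htop : ∃ x, f x ≠ ⊤)
    (hcoer : ∀ M : ℝ, ∃ R : ℝ, ∀ x : H, R ≤ ‖x‖ → (M : EReal) ≤ f x) :
    ∃ x : H, ∀ y : H, f x ≤ f y := by
  set L : EReal := ⨅ y, f y with hL
  obtain ⟨x₀, hx₀⟩ := htop
  have hLtop : L ≠ ⊤ := fun h => hx₀ (top_le_iff.1 (h ▸ iInf_le f x₀))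
  classical
  set b : ℕ → ℝ := fun n => if L = ⊥ then -(n:ℝ) else L.toReal + 1/(n+1) with hb
  have hbanti : Antitone b := by
    intro n m hnm
    rw [hb]
    by_cases h : L = ⊥ <;> simp only [h, if_true, if_false, reduceIte]
    · simp only [neg_le_neg_iff]; exact_mod_cast hnm
    · have : (1:ℝ)/(m+1) ≤ 1/(n+1) := by
        apply one_div_le_one_div_of_le (by positivity)
        exact_mod_cast Nat.add_le_add_right hnm 1
      linarith
  have hLb : ∀ n, L < ((b n : ℝ) : EReal) := by
    intro n
    rw [hb]
    by_cases h : L = ⊥ <;> simp only [h, if_true, if_false, reduceIte]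
    · exact bot_lt_iff_ne_bot.2 (EReal.coe_ne_bot _)
    · nth_rewrite 1 [← EReal.coe_toReal hLtop h]
      rw [EReal.coe_lt_coe_iff]
      have : (0:ℝ) < 1/((n:ℝ)+1) := by positivity
      linarith
  obtain ⟨R, hR⟩ := hcoer (b 0 + 1)
  have hball : ∀ (n : ℕ) (x : H), f x ≤ ((b n : ℝ) : EReal) → ‖x‖ ≤ R := by
    intro n x hx
    by_contra hc
    push_neg at hc
    have h1 := hR x hc.le
    have h2 : ((b 0 + 1 : ℝ) : EReal) ≤ ((b n : ℝ) : EReal) := le_trans h1 hx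
    rw [EReal.coe_le_coe_iff] at h2
    have := hbanti (Nat.zero_le n)
    linarith
  have hlt : ∀ n, ∃ x, f x < ((b n : ℝ) : EReal) := by
    intro n
    have : L < ((b n : ℝ) : EReal) := hLb n
    rw [hL] at this
    exact iInf_lt_iff.1 this
  obtain ⟨x, hx⟩ := attains_aux f hlsc hconv b hbanti hlt R hball
  have hfL : f x ≤ L := by
    by_cases h : L = ⊥
    · have : f x = ⊥ := by
        apply ebot_of_forall
        intro n
        have := hx n
        rw [hb] at this
        simpa [h] using this
      exact absurd this (hbot x)
    · have : f x ≤ ((L.toReal : ℝ) : EReal) := by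
        apply ele_of_forall (l := L.toReal)
        intro n
        have := hx n
        rw [hb] at this
        simpa [h] using this
      rwa [EReal.coe_toReal hLtop h] at this
  exact ⟨x, fun y => le_trans hfL (iInf_le f y)⟩

end Helpers

/-- properties of `ω(ε) = inf_H (Ψ + εΦ)`: (a) `ω` is nonpositive,
nonincreasing and concave on `[0,∞)`; if `Ψ + Φ` is coercive, then (b) `ω(ε)` is finite
and attained for `ε ∈ [0,1]`, and (c) `ω(ε)/ε → 0` as `ε → 0⁺`. -/
theorem omega_properties
    (Ψ Φ : H → EReal)
    (hΨlsc : LowerSemicontinuous Ψ) (hΨconv : EConvex Ψ)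
    (hΨproper : (∀ x : H, Ψ x ≠ ⊥) ∧ ∃ x : H, Ψ x ≠ ⊤)
    (hΨinf : (⨅ y : H, Ψ y) = (0 : EReal)) (hCne : (ArgMin Ψ).Nonempty)
    (hΦlsc : LowerSemicontinuous Φ) (hΦconv : EConvex Φ)
    (hΦproper : (∀ x : H, Φ x ≠ ⊥) ∧ ∃ x : H, Φ x ≠ ⊤)
    (hΦinf : (⨅ y : ArgMin Ψ, Φ (y : H)) = (0 : EReal))
    (hSne : (ArgMinOn Φ (ArgMin Ψ)).Nonempty)
    (omg : ℝ → EReal) (homg : ∀ e : ℝ, omg e = ⨅ y : H, (Ψ y + (e : EReal) * Φ y)) :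
    -- (a)
    ((∀ e : ℝ, 0 ≤ e → omg e ≤ 0) ∧ AntitoneOn omg (Ici 0) ∧
      (∀ e₁ e₂ lam : ℝ, 0 ≤ e₁ → 0 ≤ e₂ → 0 ≤ lam → lam ≤ 1 →
        (lam : EReal) * omg e₁ + ((1 - lam : ℝ) : EReal) * omg e₂ ≤
          omg (lam * e₁ + (1 - lam) * e₂))) ∧
    -- coercivity of `Ψ + Φ` implies (b) and (c)
    ((∀ M : ℝ, ∃ R : ℝ, ∀ x : H, R ≤ ‖x‖ → (M : EReal) ≤ Ψ x + Φ x) →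
      -- (b)
      ((∀ e : ℝ, 0 ≤ e → e ≤ 1 → omg e ≠ ⊥ ∧ ∃ x : H, Ψ x + (e : EReal) * Φ x = omg e) ∧
      -- (c)
        Tendsto (fun e : ℝ => (omg e).toReal / e) (𝓝[>] (0:ℝ)) (𝓝 (0:ℝ)))) := by
  obtain ⟨hΨbot, -⟩ := hΨproper
  obtain ⟨hΦbot, -⟩ := hΦproper
  have hΨ0 : ∀ x : H, (0:EReal) ≤ Ψ x := fun x => hΨinf ▸ iInf_le Ψ x
  obtain ⟨xb, hxbC, hxbmin⟩ := hSne
  have hΨxb : Ψ xb = 0 := le_antisymm (hΨinf ▸ le_iInf fun y => hxbC y) (hΨ0 xb)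
  have hΦxb : Φ xb = 0 := by
    apply le_antisymm
    · rw [← hΦinf]
      exact le_iInf fun y => hxbmin (y : H) y.2
    · rw [← hΦinf]
      exact iInf_le _ (⟨xb, hxbC⟩ : ArgMin Ψ)
  have homgle0 : ∀ e : ℝ, omg e ≤ 0 := by
    intro e
    rw [homg e]
    calc (⨅ y : H, (Ψ y + (e:EReal) * Φ y)) ≤ Ψ xb + (e:EReal) * Φ xb := iInf_le _ xb
      _ = 0 := by rw [hΨxb, hΦxb, mul_zero, add_zero]
  have homg0 : omg 0 = 0 := by
    rw [homg 0]
    simp only [EReal.coe_zero, zero_mul, add_zero]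
    exact hΨinf
  have conc : ∀ e₁ e₂ lam : ℝ, 0 ≤ e₁ → 0 ≤ e₂ → 0 ≤ lam → lam ≤ 1 →
      (lam : EReal) * omg e₁ + ((1 - lam : ℝ) : EReal) * omg e₂ ≤
        omg (lam * e₁ + (1 - lam) * e₂) := by
    intro e₁ e₂ lam he₁ he₂ hlam hlam1
    have hmu : (0:ℝ) ≤ 1 - lam := by linarith
    rw [homg, homg, homg]
    apply le_iInf
    intro y
    have h1 : (lam:EReal) * (⨅ z : H, (Ψ z + (e₁:EReal) * Φ z)) ≤
        (lam:EReal) * (Ψ y + (e₁:EReal) * Φ y) :=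
      mul_le_mul_of_nonneg_left (iInf_le _ y) (by exact_mod_cast hlam)
    have h2 : ((1 - lam:ℝ):EReal) * (⨅ z : H, (Ψ z + (e₂:EReal) * Φ z)) ≤
        ((1 - lam:ℝ):EReal) * (Ψ y + (e₂:EReal) * Φ y) :=
      mul_le_mul_of_nonneg_left (iInf_le _ y) (by exact_mod_cast hmu)
    calc (lam:EReal) * (⨅ z : H, (Ψ z + (e₁:EReal) * Φ z)) +
          ((1 - lam:ℝ):EReal) * (⨅ z : H, (Ψ z + (e₂:EReal) * Φ z))
        ≤ (lam:EReal) * (Ψ y + (e₁:EReal) * Φ y) +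
          ((1 - lam:ℝ):EReal) * (Ψ y + (e₂:EReal) * Φ y) := add_le_add h1 h2
      _ ≤ Ψ y + ((lam * e₁ + (1 - lam) * e₂ : ℝ) : EReal) * Φ y :=
          keyineq hlam hmu (by ring) he₁ he₂ (hΨbot y) (hΦbot y)
  have hanti : AntitoneOn omg (Ici 0) := by
    intro e₁ he₁ e₂ he₂ h12
    simp only [mem_Ici] at he₁ he₂
    rcases he₂.eq_or_lt with rfl | he₂pos
    · have : e₁ = 0 := le_antisymm h12 he₁
      rw [this]
    · have hc0 : 0 ≤ e₁ / e₂ := div_nonneg he₁ he₂pos.le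
      have hc1 : e₁ / e₂ ≤ 1 := (div_le_one he₂pos).2 h12
      have hconc := conc 0 e₂ (1 - e₁ / e₂) le_rfl he₂pos.le (by linarith) (by linarith)
      rw [homg0, mul_zero, zero_add] at hconc
      have harg : (1 - e₁ / e₂) * 0 + (1 - (1 - e₁ / e₂)) * e₂ = e₁ := by
        field_simp
        ring
      have hcoef : (1 - (1 - e₁ / e₂) : ℝ) = e₁ / e₂ := by ring
      rw [harg, hcoef] at hconc
      calc omg e₂ ≤ ((e₁ / e₂ : ℝ) : EReal) * omg e₂ :=
            ele_self_mul (homgle0 e₂) hc0 hc1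
        _ ≤ omg e₁ := hconc
  refine ⟨⟨fun e _ => homgle0 e, hanti, conc⟩, ?_⟩
  intro hcoer
  -- properties of f_e = Ψ + e•Φ
  have hf_bot : ∀ e : ℝ, 0 ≤ e → ∀ x : H, Ψ x + (e:EReal) * Φ x ≠ ⊥ := by
    intro e he x h
    rcases EReal.add_eq_bot_iff.1 h with h | h
    · exact hΨbot x h
    · exact emul_ne_bot he (hΦbot x) h
  have hf_lsc : ∀ e : ℝ, 0 ≤ e → LowerSemicontinuous (fun x : H => Ψ x + (e:EReal) * Φ x) := by
    intro e he
    apply hΨlsc.add' (elsc_mul he hΦlsc)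
    intro x
    exact EReal.continuousAt_add (Or.inr (emul_ne_bot he (hΦbot x)))
      (Or.inl (hΨbot x))
  have hf_conv : ∀ e : ℝ, 0 ≤ e → EConvex (fun x : H => Ψ x + (e:EReal) * Φ x) := by
    intro e he x y a b ha hb hab
    have h1 : Ψ (a • x + b • y) ≤ (a:EReal) * Ψ x + (b:EReal) * Ψ y := hΨconv x y a b ha hb hab
    have h2 : (e:EReal) * Φ (a • x + b • y) ≤
        (e:EReal) * ((a:EReal) * Φ x + (b:EReal) * Φ y) :=
      mul_le_mul_of_nonneg_left (hΦconv x y a b ha hb hab) (by exact_mod_cast he)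
    have h3 : (e:EReal) * ((a:EReal) * Φ x + (b:EReal) * Φ y) =
        (a:EReal) * ((e:EReal) * Φ x) + (b:EReal) * ((e:EReal) * Φ y) := by
      rw [edistrib he (emul_ne_bot ha (hΦbot x)) (emul_ne_bot hb (hΦbot y))]
      rw [← mul_assoc, EReal.mul_comm (e:EReal) (a:EReal), mul_assoc,
        ← mul_assoc (e:EReal), EReal.mul_comm (e:EReal) (b:EReal), mul_assoc]
    have h4 : (a:EReal) * (Ψ x + (e:EReal) * Φ x) =
        (a:EReal) * Ψ x + (a:EReal) * ((e:EReal) * Φ x) :=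
      edistrib ha (hΨbot x) (emul_ne_bot he (hΦbot x))
    have h5 : (b:EReal) * (Ψ y + (e:EReal) * Φ y) =
        (b:EReal) * Ψ y + (b:EReal) * ((e:EReal) * Φ y) :=
      edistrib hb (hΨbot y) (emul_ne_bot he (hΦbot y))
    calc Ψ (a • x + b • y) + (e:EReal) * Φ (a • x + b • y)
        ≤ ((a:EReal) * Ψ x + (b:EReal) * Ψ y) +
          ((a:EReal) * ((e:EReal) * Φ x) + (b:EReal) * ((e:EReal) * Φ y)) := by
          rw [← h3]; exact add_le_add h1 h2
      _ = (a:EReal) * (Ψ x + (e:EReal) * Φ x) + (b:EReal) * (Ψ y + (e:EReal) * Φ y) := by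
          rw [h4, h5, add_add_add_comm]
  have hf_coer : ∀ e : ℝ, 0 < e → e ≤ 1 → ∀ M : ℝ, ∃ R : ℝ, ∀ x : H,
      R ≤ ‖x‖ → (M : EReal) ≤ Ψ x + (e:EReal) * Φ x := by
    intro e he he1 M
    obtain ⟨R, hR⟩ := hcoer (|M| / e)
    refine ⟨R, fun x hx => ?_⟩
    have h1 : ((|M| / e : ℝ) : EReal) ≤ Ψ x + Φ x := hR x hx
    have h2 : (M : EReal) ≤ ((|M| : ℝ) : EReal) := by
      exact_mod_cast le_abs_self M
    have h3 : ((|M| : ℝ) : EReal) = (e:EReal) * ((|M| / e : ℝ) : EReal) := by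
      rw [← EReal.coe_mul]
      norm_cast
      field_simp
    have h4 : (e:EReal) * ((|M| / e : ℝ) : EReal) ≤ (e:EReal) * (Ψ x + Φ x) :=
      mul_le_mul_of_nonneg_left h1 (by exact_mod_cast he.le)
    have h5 : (e:EReal) * (Ψ x + Φ x) = (e:EReal) * Ψ x + (e:EReal) * Φ x :=
      edistrib he.le (hΨbot x) (hΦbot x)
    have h6 : (e:EReal) * Ψ x ≤ Ψ x := by
      have h7 : (e:EReal) ≤ 1 := by exact_mod_cast he1
      have := mul_le_mul_of_nonneg_right h7 (hΨ0 x)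
      rwa [one_mul] at this
    calc (M : EReal) ≤ ((|M| : ℝ) : EReal) := h2
      _ = (e:EReal) * ((|M| / e : ℝ) : EReal) := h3
      _ ≤ (e:EReal) * (Ψ x + Φ x) := h4
      _ = (e:EReal) * Ψ x + (e:EReal) * Φ x := h5
      _ ≤ Ψ x + (e:EReal) * Φ x := add_le_add h6 le_rfl
  have hf_min : ∀ e : ℝ, 0 ≤ e → e ≤ 1 →
      ∃ x : H, ∀ y : H, Ψ x + (e:EReal) * Φ x ≤ Ψ y + (e:EReal) * Φ y := by
    intro e he he1
    rcases he.eq_or_lt with rfl | hepos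
    · refine ⟨xb, fun y => ?_⟩
      simp only [EReal.coe_zero, zero_mul, add_zero, hΨxb, hΦxb]
      exact hΨ0 y
    · exact attains_min _ (hf_lsc e he) (hf_conv e he) (hf_bot e he)
        ⟨xb, by rw [hΨxb, hΦxb, mul_zero, add_zero]; simp⟩ (hf_coer e hepos he1)
  have hB : ∀ e : ℝ, 0 ≤ e → e ≤ 1 →
      omg e ≠ ⊥ ∧ ∃ x : H, Ψ x + (e:EReal) * Φ x = omg e := by
    intro e he he1
    obtain ⟨xm, hxm⟩ := hf_min e he he1
    have homge : omg e = Ψ xm + (e:EReal) * Φ xm := by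
      rw [homg]
      exact le_antisymm (iInf_le _ xm) (le_iInf hxm)
    exact ⟨by rw [homge]; exact hf_bot e he xm, ⟨xm, homge.symm⟩⟩
  refine ⟨hB, ?_⟩
  -- lower bound m for Ψ + Φ
  obtain ⟨z, hz⟩ := hf_min 1 zero_le_one le_rfl
  simp only [EReal.coe_one, one_mul] at hz
  have hzbot : Ψ z + Φ z ≠ ⊥ := by
    intro h
    rcases EReal.add_eq_bot_iff.1 h with h | h
    exacts [hΨbot z h, hΦbot z h]
  have hzle : Ψ z + Φ z ≤ 0 := by
    have := hz xb
    rwa [hΨxb, hΦxb, add_zero] at this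
  have hztop : Ψ z + Φ z ≠ ⊤ := fun h => by rw [h] at hzle; simp at hzle
  set m : ℝ := (Ψ z + Φ z).toReal with hmdef
  have hmcoe : ((m:ℝ):EReal) = Ψ z + Φ z := EReal.coe_toReal hztop hzbot
  have hm : ∀ y : H, ((m:ℝ):EReal) ≤ Ψ y + Φ y := fun y => hmcoe ▸ hz y
  -- key claim
  have key : ∀ δ : ℝ, 0 < δ → ∃ ε₀ : ℝ, 0 < ε₀ ∧ ε₀ ≤ 1 ∧
      ((-(δ * ε₀) : ℝ) : EReal) ≤ omg ε₀ := by
    intro δ hδ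
    by_contra hcon
    push_neg at hcon
    obtain ⟨R, hR⟩ := hcoer 0
    have hε : ∀ n : ℕ, (0:ℝ) < 1/((n:ℝ)+1) := fun n => by positivity
    have hε1 : ∀ n : ℕ, 1/((n:ℝ)+1) ≤ 1 := by
      intro n
      rw [div_le_one (by positivity)]
      linarith [Nat.cast_nonneg (α := ℝ) n]
    have hxn : ∀ n : ℕ, ∃ x : H, ∀ y : H,
        Ψ x + ((1/((n:ℝ)+1) : ℝ):EReal) * Φ x ≤ Ψ y + ((1/((n:ℝ)+1):ℝ):EReal) * Φ y :=
      fun n => hf_min _ (hε n).le (hε1 n)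
    choose x hx using hxn
    have hval : ∀ n : ℕ, Ψ (x n) + ((1/((n:ℝ)+1):ℝ):EReal) * Φ (x n) <
        ((-(δ * (1/((n:ℝ)+1))) : ℝ) : EReal) := by
      intro n
      have h1 := hcon (1/((n:ℝ)+1)) (hε n) (hε1 n)
      have h2 : omg (1/((n:ℝ)+1)) = Ψ (x n) + ((1/((n:ℝ)+1):ℝ):EReal) * Φ (x n) := by
        rw [homg]
        exact le_antisymm (iInf_le _ (x n)) (le_iInf (hx n))
      rwa [h2] at h1
    have hΨtop : ∀ n, Ψ (x n) ≠ ⊤ := by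
      intro n h
      have h1 := hval n
      rw [h, EReal.top_add_of_ne_bot (emul_ne_bot (hε n).le (hΦbot _))] at h1
      exact not_top_lt h1
    have hΦtop : ∀ n, Φ (x n) ≠ ⊤ := by
      intro n h
      have h1 := hval n
      rw [h, EReal.coe_mul_top_of_pos (hε n), EReal.add_top_of_ne_bot (hΨbot _)] at h1
      exact not_top_lt h1
    set ψ : ℕ → ℝ := fun n => (Ψ (x n)).toReal with hψdef
    set φ : ℕ → ℝ := fun n => (Φ (x n)).toReal with hφdef
    have hψcoe : ∀ n, ((ψ n : ℝ):EReal) = Ψ (x n) := fun n => EReal.coe_toReal (hΨtop n) (hΨbot _)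
    have hφcoe : ∀ n, ((φ n : ℝ):EReal) = Φ (x n) := fun n => EReal.coe_toReal (hΦtop n) (hΦbot _)
    have hreal : ∀ n : ℕ, ψ n + (1/((n:ℝ)+1)) * φ n < -(δ * (1/((n:ℝ)+1))) := by
      intro n
      have h1 := hval n
      rw [← hψcoe n, ← hφcoe n, ← EReal.coe_mul, ← EReal.coe_add, EReal.coe_lt_coe_iff] at h1
      exact h1
    have hψ0 : ∀ n, 0 ≤ ψ n := by
      intro n
      have h1 := hΨ0 (x n)
      rw [← hψcoe n] at h1
      exact_mod_cast h1
    have hmn : ∀ n, m ≤ ψ n + φ n := by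
      intro n
      have h1 := hm (x n)
      rw [← hψcoe n, ← hφcoe n, ← EReal.coe_add, EReal.coe_le_coe_iff] at h1
      exact h1
    have hφδ : ∀ n, φ n ≤ -δ := by
      intro n
      have h1 := hreal n
      have h2 := hψ0 n
      have h3 := hε n
      nlinarith
    have hψsmall : ∀ n : ℕ, 1 ≤ n → ψ n < (-δ - m) / n := by
      intro n hn
      have h1 := hreal n
      have h2 := hmn n
      have h3 := hε n
      have hn' : (1:ℝ) ≤ (n:ℝ) := by exact_mod_cast hn
      rw [lt_div_iff₀ (by linarith)]
      have h4 : ψ n * ((n:ℝ)+1) + φ n < -δ := by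
        have h5 := mul_lt_mul_of_pos_left h1 (show (0:ℝ) < (n:ℝ)+1 by linarith)
        calc ψ n * ((n:ℝ)+1) + φ n
            = ((n:ℝ)+1) * (ψ n + (1/((n:ℝ)+1)) * φ n) := by field_simp
          _ < ((n:ℝ)+1) * (-(δ * (1/((n:ℝ)+1)))) := h5
          _ = -δ := by field_simp
      linarith
    have hbound : ∀ n, ‖x n‖ ≤ |R| := by
      intro n
      by_contra hc
      push_neg at hc
      have hRx : R ≤ ‖x n‖ := le_trans (le_abs_self R) hc.le
      have h0 := hR (x n) hRx
      rw [← hψcoe n, ← hφcoe n, ← EReal.coe_add] at h0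
      have h0' : (0:ℝ) ≤ ψ n + φ n := by exact_mod_cast h0
      have h1 := hreal n
      have h2 := hψ0 n
      have h3 := hε n
      have h4 := hε1 n
      have h5 : (1/((n:ℝ)+1)) * (-(ψ n)) ≤ (1/((n:ℝ)+1)) * φ n :=
        mul_le_mul_of_nonneg_left (by linarith) h3.le
      have h6 : 0 ≤ ψ n * (1 - 1/((n:ℝ)+1)) := mul_nonneg h2 (by linarith)
      nlinarith [mul_pos hδ h3]
    have hchoose : ∀ j : ℕ, ∃ n : ℕ, ψ n ≤ 1/((j:ℝ)+1) := by
      intro j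
      set n : ℕ := max 1 ⌈(-δ - m) * ((j:ℝ)+1)⌉₊ with hn
      have hn1 : 1 ≤ n := le_max_left _ _
      have hnn : ⌈(-δ - m) * ((j:ℝ)+1)⌉₊ ≤ n := le_max_right _ _
      have hnr : (-δ - m) * ((j:ℝ)+1) ≤ (n:ℝ) :=
        le_trans (Nat.le_ceil _) (Nat.cast_le.2 hnn)
      refine ⟨n, ?_⟩
      have h1 := hψsmall n hn1
      have hnpos : (0:ℝ) < n := by exact_mod_cast hn1
      have h2 : (-δ - m)/(n:ℝ) ≤ 1/((j:ℝ)+1) := by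
        rw [div_le_div_iff₀ hnpos (by positivity)]
        linarith
      linarith
    set K : ℕ → Set H := fun j => Metric.closedBall (0:H) |R| ∩
      ({w : H | Ψ w ≤ ((1/((j:ℝ)+1) : ℝ):EReal)} ∩ {w : H | Φ w ≤ ((-δ : ℝ):EReal)}) with hK
    have hKne : ∀ j, (K j).Nonempty := by
      intro j
      obtain ⟨n, hn⟩ := hchoose j
      refine ⟨x n, mem_closedBall_zero_iff.2 (hbound n), ?_, ?_⟩
      · show Ψ (x n) ≤ _
        rw [← hψcoe n]
        exact_mod_cast hn
      · show Φ (x n) ≤ _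
        rw [← hφcoe n]
        exact_mod_cast hφδ n
    have hKconv : ∀ j, Convex ℝ (K j) := fun j =>
      (convex_closedBall _ _).inter ((sublevel_convex hΨconv _).inter (sublevel_convex hΦconv _))
    have hKcl : ∀ j, IsClosed (K j) := fun j =>
      Metric.isClosed_closedBall.inter ((hΨlsc.isClosed_preimage _).inter (hΦlsc.isClosed_preimage _))
    have hKmono : ∀ j, K (j+1) ⊆ K j := by
      intro j y hy
      refine ⟨hy.1, ?_, hy.2.2⟩
      have h1 : Ψ y ≤ ((1/(((j+1:ℕ):ℝ)+1) : ℝ):EReal) := hy.2.1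
      show Ψ y ≤ ((1/((j:ℝ)+1) : ℝ):EReal)
      refine le_trans h1 (EReal.coe_le_coe_iff.2 ?_)
      apply one_div_le_one_div_of_le (by positivity)
      push_cast
      linarith
    have hKbd : ∀ j, ∀ y ∈ K j, ‖y‖ ≤ |R| := fun j y hy => mem_closedBall_zero_iff.1 hy.1
    obtain ⟨xs, hxs⟩ := nested_inter K hKne hKconv hKcl hKmono |R| hKbd
    have hxsΨ : Ψ xs ≤ ((0:ℝ):EReal) := by
      apply ele_of_forall (l := 0)
      intro j
      have h1 := (mem_iInter.1 hxs j).2.1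
      have h2 : ((0:ℝ) + 1/((j:ℝ)+1) : ℝ) = 1/((j:ℝ)+1) := by ring
      rw [h2]
      exact h1
    have hxsC : xs ∈ ArgMin Ψ := by
      have h1 : Ψ xs = 0 := le_antisymm (by exact_mod_cast hxsΨ) (hΨ0 xs)
      show ∀ y : H, Ψ xs ≤ Ψ y
      intro y
      rw [h1]
      exact hΨ0 y
    have hxsΦ : Φ xs ≤ ((-δ : ℝ):EReal) := (mem_iInter.1 hxs 0).2.2
    have h0le : (0:EReal) ≤ Φ xs := hΦinf ▸ iInf_le _ (⟨xs, hxsC⟩ : ArgMin Ψ)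
    have h2 : (0:EReal) ≤ ((-δ:ℝ):EReal) := le_trans h0le hxsΦ
    have h3 : (0:ℝ) ≤ -δ := by exact_mod_cast h2
    linarith
  -- conclude the limit
  rw [Metric.tendsto_nhdsWithin_nhds]
  intro δ' hδ'
  obtain ⟨ε₀, hε₀pos, hε₀1, hε₀⟩ := key (δ'/2) (half_pos hδ')
  refine ⟨ε₀, hε₀pos, fun ε hεmem hεdist => ?_⟩
  have hεpos : (0:ℝ) < ε := hεmem
  have hεlt : ε < ε₀ := by
    rw [Real.dist_eq, sub_zero] at hεdist
    exact lt_of_abs_lt hεdist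
  have hε1 : ε ≤ 1 := le_trans hεlt.le hε₀1
  -- concavity chord bound
  have hc0 : 0 ≤ ε / ε₀ := div_nonneg hεpos.le hε₀pos.le
  have hc1 : ε / ε₀ ≤ 1 := (div_le_one hε₀pos).2 hεlt.le
  have hconc := conc 0 ε₀ (1 - ε / ε₀) le_rfl hε₀pos.le (by linarith) (by linarith)
  rw [homg0, mul_zero, zero_add] at hconc
  have harg : (1 - ε / ε₀) * 0 + (1 - (1 - ε / ε₀)) * ε₀ = ε := by field_simp; ring
  have hcoef : (1 - (1 - ε / ε₀) : ℝ) = ε / ε₀ := by ring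
  rw [harg, hcoef] at hconc
  have hlow : ((-(δ'/2 * ε) : ℝ) : EReal) ≤ omg ε := by
    have h1 : ((ε/ε₀ : ℝ) : EReal) * ((-(δ'/2 * ε₀) : ℝ) : EReal) ≤
        ((ε/ε₀ : ℝ) : EReal) * omg ε₀ :=
      mul_le_mul_of_nonneg_left hε₀ (by exact_mod_cast hc0)
    have h2 : ((ε/ε₀ : ℝ) : EReal) * ((-(δ'/2 * ε₀) : ℝ) : EReal) =
        ((-(δ'/2 * ε) : ℝ) : EReal) := by
      rw [← EReal.coe_mul]
      norm_cast
      field_simp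
    rw [h2] at h1
    exact le_trans h1 hconc
  obtain ⟨hne_bot, -⟩ := hB ε hεpos.le hε1
  have hle0 : omg ε ≤ 0 := homgle0 ε
  have hne_top : omg ε ≠ ⊤ := fun h => by rw [h] at hle0; simp at hle0
  have h3 : -(δ'/2 * ε) ≤ (omg ε).toReal := by
    have := EReal.toReal_le_toReal hlow (EReal.coe_ne_bot _) hne_top
    rw [EReal.toReal_coe] at this; exact this
  have h4 : (omg ε).toReal ≤ 0 := by
    have := EReal.toReal_le_toReal hle0 hne_bot (by simp)
    simpa using this
  rw [Real.dist_eq, sub_zero, abs_div]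
  rw [abs_of_pos hεpos, div_lt_iff₀ hεpos]
  have h5 : |(omg ε).toReal| ≤ δ'/2 * ε := by
    rw [abs_le]
    constructor <;> [linarith; nlinarith [mul_pos (half_pos hδ') hεpos]]
  nlinarith [mul_pos (half_pos hδ') hεpos]
end

section
/- Assume (H_Ψ): Ψ : H → ℝ ∪ {+∞} is a closed convex proper function with inf_H Ψ = 0 and C = argmin Ψ ≠ ∅; and (H_Φ): Φ : H → ℝ ∪ {+∞} is a closed convex proper function with inf_C Φ = 0 and S = argmin_C Φ ≠ ∅. Define ω(ε) = inf_{x∈H} (Ψ(x) + εΦ(x)). Then: (a) for every ε ≥ 0, |ω(ε)| ≤ inf_{p∈H} [Ψ*(εp) + εΦ*(−p)]; (b) if ε > 0, ω(ε) > −∞, and there exists x₀ ∈ dom Ψ such that Φ is continuous at x₀, then equality holds and the infimum is attained: |ω(ε)| = min_{p∈H} [Ψ*(εp) + εΦ*(−p)]; (c) if there exists x₀ ∈ C at which Φ is continuous, then there exist x̄ ∈ S and p ∈ N_C(x̄) such that, for every ε ≥ 0, |ω(ε)| ≤ Ψ*(εp) − σ_C(εp). -/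
open MeasureTheory Set Filter Topology ENNReal RealInnerProductSpace

variable {H : Type*} [NormedAddCommGroup H] [InnerProductSpace ℝ H] [CompleteSpace H]

namespace OmegaAux

lemma emul_ne_bot (a : ℝ) (ha : 0 ≤ a) (u : EReal) (hu : u ≠ ⊥) : (a : EReal) * u ≠ ⊥ := by
  rcases eq_or_lt_of_le ha with h | h
  · simp [← h]
  · induction u using EReal.rec with
    | bot => exact absurd rfl hu
    | coe r => rw [← EReal.coe_mul]; exact EReal.coe_ne_bot _
    | top => rw [EReal.coe_mul_top_of_pos h]; simp

lemma emul_le_emul (e : ℝ) (he : 0 ≤ e) {u v : EReal} (h : u ≤ v) :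
    (e : EReal) * u ≤ (e : EReal) * v := by
  rcases eq_or_lt_of_le he with h0 | h0
  · simp [← h0]
  · induction u using EReal.rec with
    | bot => rw [EReal.coe_mul_bot_of_pos h0]; exact bot_le
    | coe r =>
      induction v using EReal.rec with
      | bot => exact absurd h (by simp)
      | coe s =>
        rw [← EReal.coe_mul, ← EReal.coe_mul]
        exact EReal.coe_le_coe_iff.2 (mul_le_mul_of_nonneg_left (EReal.coe_le_coe_iff.1 h) he)
      | top => rw [EReal.coe_mul_top_of_pos h0]; exact le_top
    | top =>
      have : v = ⊤ := top_le_iff.1 h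
      rw [this]

lemma emul_add (e : ℝ) (he : 0 ≤ e) (u v : EReal) (hu : u ≠ ⊥) (hv : v ≠ ⊥) :
    (e : EReal) * (u + v) = (e : EReal) * u + (e : EReal) * v := by
  rcases eq_or_lt_of_le he with h0 | h0
  · simp [← h0]
  · induction u using EReal.rec with
    | bot => exact absurd rfl hu
    | coe r =>
      induction v using EReal.rec with
      | bot => exact absurd rfl hv
      | coe s =>
        rw [← EReal.coe_add, ← EReal.coe_mul, ← EReal.coe_mul, ← EReal.coe_mul, ← EReal.coe_add]
        norm_num [mul_add]
      | top =>
        have hp : (0:EReal) < (e:EReal) := by exact_mod_cast h0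
        rw [EReal.add_top_of_ne_bot hu, EReal.mul_top_of_pos hp, ← EReal.coe_mul,
          EReal.add_top_of_ne_bot (EReal.coe_ne_bot _)]
    | top =>
      have hp : (0:EReal) < (e:EReal) := by exact_mod_cast h0
      rw [EReal.top_add_of_ne_bot hv, EReal.mul_top_of_pos hp,
        EReal.top_add_of_ne_bot (emul_ne_bot e he v hv)]

end OmegaAux

open OmegaAux in
lemma fconj_lower (f : H → EReal) (p x : H) : ((⟪p,x⟫:ℝ):EReal) - f x ≤ FConj f p :=
  le_iSup (fun x => ((⟪p,x⟫:ℝ):EReal) - f x) x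

lemma fconj_ne_bot (f : H → EReal) (hfb : ∀ x, f x ≠ ⊥) {x₁ : H} (h1 : f x₁ ≠ ⊤) (p : H) :
    FConj f p ≠ ⊥ := by
  have hu : f x₁ = (((f x₁).toReal : ℝ) : EReal) := (EReal.coe_toReal h1 (hfb x₁)).symm
  have h2 := fconj_lower f p x₁
  rw [hu, ← EReal.coe_sub] at h2
  exact ne_bot_of_le_ne_bot (EReal.coe_ne_bot _) h2

lemma fenchel_sep (f g : H → EReal) (hf : EConvex f) (hg : EConvex g)
    (hfb : ∀ x, f x ≠ ⊥) (hgb : ∀ x, g x ≠ ⊥)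
    (x₀ : H) (hfx₀ : f x₀ ≠ ⊤)
    (M : ℝ) (hU : ∀ᶠ x in 𝓝 x₀, g x < (M : EReal))
    (m : ℝ) (hm : ∀ x, (m : EReal) ≤ f x + g x) :
    ∃ q : H, FConj g q + FConj f (-q) ≤ ((-m : ℝ) : EReal) := by
  obtain ⟨U, hUg, hUopen, hx₀U⟩ := eventually_nhds_iff.mp hU
  set A : Set (H × ℝ) := {z | g z.1 < (z.2 : EReal)} with hAdef
  set B : Set (H × ℝ) := {z | f z.1 + (z.2 : EReal) ≤ (m : EReal)} with hBdef
  have hBreal : ∀ z ∈ B, f z.1 ≠ ⊤ := by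
    intro z hz hzt
    have hz' : f z.1 + (z.2 : EReal) ≤ (m : EReal) := hz
    rw [hzt, EReal.top_add_of_ne_bot (EReal.coe_ne_bot _)] at hz'
    exact (EReal.coe_ne_top m) (top_le_iff.1 hz')
  have hAconv : Convex ℝ A := by
    rintro z hz w hw a b ha hb hab
    rcases eq_or_lt_of_le ha with h0 | h0
    · have hb1 : b = 1 := by linarith
      simpa [← h0, hb1] using hw
    rcases eq_or_lt_of_le hb with h0' | h0'
    · have ha1 : a = 1 := by linarith
      simpa [← h0', ha1] using hz
    have hz' : g z.1 < (z.2 : EReal) := hz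
    have hw' : g w.1 < (w.2 : EReal) := hw
    have hu : g z.1 = (((g z.1).toReal : ℝ) : EReal) :=
      (EReal.coe_toReal (ne_top_of_lt hz') (hgb z.1)).symm
    have hv : g w.1 = (((g w.1).toReal : ℝ) : EReal) :=
      (EReal.coe_toReal (ne_top_of_lt hw') (hgb w.1)).symm
    set u := (g z.1).toReal
    set v := (g w.1).toReal
    have huz : u < z.2 := by rw [hu] at hz'; exact_mod_cast hz'
    have hvw : v < w.2 := by rw [hv] at hw'; exact_mod_cast hw'
    show g (a • z + b • w).1 < (((a • z + b • w).2 : ℝ) : EReal)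
    have hfst : (a • z + b • w).1 = a • z.1 + b • w.1 := rfl
    have hsnd : (a • z + b • w).2 = a * z.2 + b * w.2 := rfl
    rw [hfst, hsnd]
    calc g (a • z.1 + b • w.1) ≤ (a : EReal) * g z.1 + (b : EReal) * g w.1 :=
          hg z.1 w.1 a b ha hb hab
      _ = ((a * u + b * v : ℝ) : EReal) := by rw [hu, hv]; norm_cast
      _ < ((a * z.2 + b * w.2 : ℝ) : EReal) := by
          exact_mod_cast add_lt_add (mul_lt_mul_of_pos_left huz h0)
            (mul_lt_mul_of_pos_left hvw h0')
  have hBconv : Convex ℝ B := by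
    rintro z hz w hw a b ha hb hab
    rcases eq_or_lt_of_le ha with h0 | h0
    · have hb1 : b = 1 := by linarith
      simpa [← h0, hb1] using hw
    rcases eq_or_lt_of_le hb with h0' | h0'
    · have ha1 : a = 1 := by linarith
      simpa [← h0', ha1] using hz
    have hz' : f z.1 + (z.2 : EReal) ≤ (m : EReal) := hz
    have hw' : f w.1 + (w.2 : EReal) ≤ (m : EReal) := hw
    have hu : f z.1 = (((f z.1).toReal : ℝ) : EReal) :=
      (EReal.coe_toReal (hBreal z hz) (hfb z.1)).symm
    have hv : f w.1 = (((f w.1).toReal : ℝ) : EReal) :=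
      (EReal.coe_toReal (hBreal w hw) (hfb w.1)).symm
    set u := (f z.1).toReal
    set v := (f w.1).toReal
    have huz : u + z.2 ≤ m := by
      rw [hu, ← EReal.coe_add] at hz'; exact_mod_cast hz'
    have hvw : v + w.2 ≤ m := by
      rw [hv, ← EReal.coe_add] at hw'; exact_mod_cast hw'
    show f (a • z + b • w).1 + (((a • z + b • w).2 : ℝ) : EReal) ≤ (m : EReal)
    have hfst : (a • z + b • w).1 = a • z.1 + b • w.1 := rfl
    have hsnd : (a • z + b • w).2 = a * z.2 + b * w.2 := rfl
    rw [hfst, hsnd]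
    calc f (a • z.1 + b • w.1) + ((a * z.2 + b * w.2 : ℝ) : EReal)
        ≤ ((a : EReal) * f z.1 + (b : EReal) * f w.1) + ((a * z.2 + b * w.2 : ℝ) : EReal) :=
          add_le_add (hf z.1 w.1 a b ha hb hab) le_rfl
      _ = ((a * u + b * v + (a * z.2 + b * w.2) : ℝ) : EReal) := by rw [hu, hv]; norm_cast
      _ ≤ (m : EReal) := by
          refine EReal.coe_le_coe_iff.2 ?_
          have ham : a * m + b * m = m := by rw [← add_mul, hab, one_mul]
          nlinarith [mul_le_mul_of_nonneg_left huz h0.le, mul_le_mul_of_nonneg_left hvw h0'.le]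
  have hdisj : Disjoint A B := by
    rw [Set.disjoint_left]
    intro z hzA hzB
    have h1 : g z.1 < (z.2 : EReal) := hzA
    have h2 : f z.1 + (z.2 : EReal) ≤ (m : EReal) := hzB
    have hu : f z.1 = (((f z.1).toReal : ℝ) : EReal) :=
      (EReal.coe_toReal (hBreal z hzB) (hfb z.1)).symm
    have : (m : EReal) < (m : EReal) := by
      calc (m : EReal) ≤ f z.1 + g z.1 := hm z.1
        _ < f z.1 + (z.2 : EReal) := by
            rw [hu]; exact EReal.add_lt_add_left_coe h1 _
        _ ≤ (m : EReal) := h2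
    exact lt_irrefl _ this
  have hVsub : U ×ˢ Set.Ioi M ⊆ A := by
    rintro ⟨x, t⟩ hxt
    rcases Set.mem_prod.mp hxt with ⟨hxU, ht⟩
    exact lt_trans (hUg x hxU) (by exact_mod_cast ht)
  have hVint : ∀ t : ℝ, M < t → (x₀, t) ∈ interior A := fun t ht =>
    interior_maximal hVsub (hUopen.prod isOpen_Ioi) (Set.mem_prod.mpr ⟨hx₀U, ht⟩)
  obtain ⟨L, c, hLA, hLB⟩ :=
    geometric_hahn_banach_open hAconv.interior isOpen_interior hBconv
      (hdisj.mono_left interior_subset)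
  have hv₀ : (x₀, M + 1) ∈ interior A := hVint (M + 1) (by linarith)
  have hA_le : ∀ z ∈ A, L z ≤ c := by
    intro z hzA
    by_contra hcz
    push_neg at hcz
    set d := L ((x₀, M + 1) - z) with hd
    have key : ∀ t : ℝ, 0 < t → t ≤ 1 → L z + t * d < c := by
      intro t ht0 ht1
      have hmem := hAconv.add_smul_sub_mem_interior hzA hv₀ ⟨ht0, ht1⟩
      have hlt := hLA _ hmem
      rwa [map_add, L.map_smul, smul_eq_mul] at hlt
    rcases le_or_gt 0 d with hd0 | hd0
    · have h1 := key 1 one_pos le_rfl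
      nlinarith
    · have h1 : 0 < (L z - c) / (-2 * d) := div_pos (by linarith) (by linarith)
      set t := min 1 ((L z - c) / (-2 * d)) with ht
      have ht0 : 0 < t := lt_min one_pos h1
      have ht1 : t ≤ 1 := min_le_left _ _
      have h2 := key t ht0 ht1
      have h3 : t ≤ (L z - c) / (-2 * d) := min_le_right _ _
      have hdne : d ≠ 0 := hd0.ne
      have h4 : (L z - c) / (-2 * d) * d = -(L z - c) / 2 := by
        field_simp
      nlinarith [mul_le_mul_of_nonpos_right h3 hd0.le]
  set s₀ := L (0, 1) with hs₀def
  have hdec : ∀ (x : H) (t : ℝ), L (x, t) = L (x, 0) + t * s₀ := by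
    intro x t
    have hxt : (x, t) = (x, (0:ℝ)) + t • ((0:H), (1:ℝ)) := by
      simp [Prod.ext_iff]
    rw [hxt, map_add, L.map_smul, smul_eq_mul]
  have hr₀ : f x₀ = (((f x₀).toReal : ℝ) : EReal) := (EReal.coe_toReal hfx₀ (hfb x₀)).symm
  set r₀ := (f x₀).toReal
  have hBx₀ : (x₀, m - r₀) ∈ B := by
    show f x₀ + ((m - r₀ : ℝ) : EReal) ≤ (m : EReal)
    rw [hr₀, ← EReal.coe_add]
    exact le_of_eq (by norm_num)
  have hs₀lt : s₀ < 0 := by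
    have hs₀le : s₀ ≤ 0 := by
      by_contra hpos
      push_neg at hpos
      set t := max (M + 1) ((c - L (x₀, 0)) / s₀ + 1) with htdef
      have htM : M < t := lt_of_lt_of_le (by linarith) (le_max_left _ _)
      have h5 := hLA _ (hVint t htM)
      rw [hdec] at h5
      have h6 : (c - L (x₀, 0)) / s₀ + 1 ≤ t := le_max_right _ _
      have h7 : (c - L (x₀, 0)) / s₀ * s₀ = c - L (x₀, 0) := div_mul_cancel₀ _ (ne_of_gt hpos)
      nlinarith [mul_le_mul_of_nonneg_right h6 hpos.le]
    rcases eq_or_lt_of_le hs₀le with h0 | h0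
    · exfalso
      have h5 := hLA _ hv₀
      rw [hdec, h0, mul_zero, add_zero] at h5
      have h6 := hLB _ hBx₀
      rw [hdec, h0, mul_zero, add_zero] at h6
      linarith
    · exact h0
  obtain ⟨lam, hlam, hs₀lam⟩ : ∃ lam : ℝ, 0 < lam ∧ s₀ = -lam :=
    ⟨-s₀, by linarith, by ring⟩
  set q₀ := (InnerProductSpace.toDual ℝ H).symm (L.comp (ContinuousLinearMap.inl ℝ H ℝ)) with hq₀def
  have hq₀ : ∀ x : H, ⟪q₀, x⟫ = L (x, 0) := by
    intro x
    rw [hq₀def, InnerProductSpace.toDual_symm_apply]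
    simp
  set q := lam⁻¹ • q₀ with hqdef
  have hq : ∀ x : H, ⟪q, x⟫ = L (x, 0) / lam := by
    intro x
    rw [hqdef, real_inner_smul_left, hq₀ x, inv_mul_eq_div]
  have hbound1 : FConj g q ≤ ((c / lam : ℝ) : EReal) := by
    refine iSup_le fun x => ?_
    rcases eq_or_ne (g x) ⊤ with hgx | hgx
    · rw [hgx]
      exact le_trans (le_of_eq (by simp)) bot_le
    · obtain ⟨u, hu⟩ : ∃ u : ℝ, g x = ((u : ℝ) : EReal) :=
        ⟨(g x).toReal, (EReal.coe_toReal hgx (hgb x)).symm⟩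
      have key : L (x, 0) - lam * u ≤ c := by
        by_contra hk
        push_neg at hk
        have hDpos : 0 < (L (x, 0) - lam * u - c) / (2 * lam) := div_pos (by linarith) (by linarith)
        have htu : u < u + (L (x, 0) - lam * u - c) / (2 * lam) := by linarith
        have hmemA : (x, u + (L (x, 0) - lam * u - c) / (2 * lam)) ∈ A := by
          show g x < ((u + (L (x, 0) - lam * u - c) / (2 * lam) : ℝ) : EReal)
          rw [hu]; exact_mod_cast htu
        have h8 := hA_le _ hmemA
        rw [hdec, hs₀lam] at h8
        have h9 : lam * (u + (L (x, 0) - lam * u - c) / (2 * lam)) =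
            lam * u + (L (x, 0) - lam * u - c) / 2 := by
          field_simp
        nlinarith
      rw [hu, ← EReal.coe_sub]
      refine EReal.coe_le_coe_iff.2 ?_
      rw [hq x]
      have h10 := mul_le_mul_of_nonneg_right key (inv_nonneg.mpr hlam.le)
      have h11 : (L (x, 0) - lam * u) * lam⁻¹ = L (x, 0) / lam - u := by
        field_simp
      rw [h11] at h10
      rw [div_eq_mul_inv]
      exact h10
  have hbound2 : FConj f (-q) ≤ ((-(c / lam) - m : ℝ) : EReal) := by
    refine iSup_le fun x => ?_
    rcases eq_or_ne (f x) ⊤ with hfx | hfx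
    · rw [hfx]
      exact le_trans (le_of_eq (by simp)) bot_le
    · obtain ⟨u, hu⟩ : ∃ u : ℝ, f x = ((u : ℝ) : EReal) :=
        ⟨(f x).toReal, (EReal.coe_toReal hfx (hfb x)).symm⟩
      have hmemB : (x, m - u) ∈ B := by
        show f x + ((m - u : ℝ) : EReal) ≤ (m : EReal)
        rw [hu, ← EReal.coe_add]
        exact le_of_eq (by norm_num)
      have h11 := hLB _ hmemB
      rw [hdec, hs₀lam] at h11
      rw [hu, ← EReal.coe_sub]
      refine EReal.coe_le_coe_iff.2 ?_
      have hinner : ⟪-q, x⟫ = -(L (x, 0) / lam) := by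
        rw [inner_neg_left, hq x]
      rw [hinner]
      have h12 := mul_le_mul_of_nonneg_right h11 (inv_nonneg.mpr hlam.le)
      have h13 : (L (x, 0) + (m - u) * -lam) * lam⁻¹ = L (x, 0) / lam - (m - u) := by
        field_simp; ring
      rw [h13] at h12
      have h14 : c * lam⁻¹ = c / lam := (div_eq_mul_inv c lam).symm
      linarith
  refine ⟨q, ?_⟩
  calc FConj g q + FConj f (-q) ≤ ((c / lam : ℝ) : EReal) + ((-(c / lam) - m : ℝ) : EReal) :=
        add_le_add hbound1 hbound2
    _ = ((-m : ℝ) : EReal) := by rw [← EReal.coe_add]; congr 1; ring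

lemma weak_dual (Ψ Φ : H → EReal) (hΨb : ∀ x, Ψ x ≠ ⊥) (hΦb : ∀ x, Φ x ≠ ⊥)
    {x₁ : H} (hx₁ : Ψ x₁ ≠ ⊤)
    (e : ℝ) (he : 0 ≤ e) (p x : H) :
    -(Ψ x + (e : EReal) * Φ x) ≤ FConj Ψ (e • p) + (e : EReal) * FConj Φ (-p) := by
  rcases eq_or_ne (Ψ x) ⊤ with hΨx | hΨx
  · rw [hΨx, EReal.top_add_of_ne_bot (OmegaAux.emul_ne_bot e he _ (hΦb x))]
    simp
  obtain ⟨u, hu⟩ : ∃ u : ℝ, Ψ x = ((u : ℝ) : EReal) :=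
    ⟨_, (EReal.coe_toReal hΨx (hΨb x)).symm⟩
  rcases eq_or_lt_of_le he with he0 | he0
  · rw [← he0]
    simp only [zero_smul, EReal.coe_zero, zero_mul, add_zero]
    have h1 := fconj_lower Ψ 0 x
    rw [hu] at h1 ⊢
    simpa using h1
  · rcases eq_or_ne (Φ x) ⊤ with hΦx | hΦx
    · rw [hΦx, EReal.mul_top_of_pos (by exact_mod_cast he0),
        EReal.add_top_of_ne_bot (by rw [hu]; exact EReal.coe_ne_bot u)]
      simp
    obtain ⟨v, hv⟩ : ∃ v : ℝ, Φ x = ((v : ℝ) : EReal) :=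
      ⟨_, (EReal.coe_toReal hΦx (hΦb x)).symm⟩
    have h1 := fconj_lower Ψ (e • p) x
    have h2 := fconj_lower Φ (-p) x
    have h3 : (e : EReal) * (((⟪-p, x⟫ - v : ℝ)) : EReal) ≤ (e : EReal) * FConj Φ (-p) := by
      refine OmegaAux.emul_le_emul e he ?_
      rw [EReal.coe_sub, ← hv]
      exact h2
    calc -(Ψ x + (e : EReal) * Φ x) = ((-(u + e * v) : ℝ) : EReal) := by
          rw [hu, hv]; norm_cast
      _ = ((⟪e • p, x⟫ - u : ℝ) : EReal) + ((e * (⟪-p, x⟫ - v) : ℝ) : EReal) := by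
          rw [← EReal.coe_add]
          congr 1
          rw [real_inner_smul_left, inner_neg_left]
          ring
      _ ≤ FConj Ψ (e • p) + (e : EReal) * FConj Φ (-p) := by
          refine add_le_add ?_ ?_
          · rw [EReal.coe_sub, ← hu]; exact h1
          · rw [EReal.coe_mul]; exact h3

/-- duality estimates for `|ω(ε)| = −ω(ε)` where
`ω(ε) = inf_H (Ψ + εΦ)`: (a) `|ω(ε)| ≤ inf_p [Ψ*(εp) + εΦ*(−p)]`; (b) equality with
attainment under the qualification condition (QC'); (c) under (QC), there exist
`x̄ ∈ S` and `p ∈ N_C(x̄)` with `|ω(ε)| ≤ Ψ*(εp) − σ_C(εp)` for all `ε ≥ 0`. -/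
theorem omega_duality_estimates
    (Ψ Φ : H → EReal)
    (hΨlsc : LowerSemicontinuous Ψ) (hΨconv : EConvex Ψ)
    (hΨproper : (∀ x : H, Ψ x ≠ ⊥) ∧ ∃ x : H, Ψ x ≠ ⊤)
    (hΨinf : (⨅ y : H, Ψ y) = (0 : EReal)) (hCne : (ArgMin Ψ).Nonempty)
    (hΦlsc : LowerSemicontinuous Φ) (hΦconv : EConvex Φ)
    (hΦproper : (∀ x : H, Φ x ≠ ⊥) ∧ ∃ x : H, Φ x ≠ ⊤)
    (hΦinf : (⨅ y : ArgMin Ψ, Φ (y : H)) = (0 : EReal))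
    (hSne : (ArgMinOn Φ (ArgMin Ψ)).Nonempty)
    (omg : ℝ → EReal) (homg : ∀ e : ℝ, omg e = ⨅ y : H, (Ψ y + (e : EReal) * Φ y)) :
    -- (a)
    (∀ e : ℝ, 0 ≤ e →
      -omg e ≤ ⨅ p : H, (FConj Ψ (e • p) + (e : EReal) * FConj Φ (-p))) ∧
    -- (b)
    (∀ e : ℝ, 0 < e → omg e ≠ ⊥ →
      (∃ x₀ : H, Ψ x₀ ≠ ⊤ ∧ ContinuousAt Φ x₀ ∧ Φ x₀ ≠ ⊤) →
      ∃ p : H, -omg e = FConj Ψ (e • p) + (e : EReal) * FConj Φ (-p) ∧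
        ∀ q : H, FConj Ψ (e • p) + (e : EReal) * FConj Φ (-p) ≤
          FConj Ψ (e • q) + (e : EReal) * FConj Φ (-q)) ∧
    -- (c)
    ((∃ x₀ ∈ ArgMin Ψ, ContinuousAt Φ x₀ ∧ Φ x₀ ≠ ⊤) →
      ∃ xbar ∈ ArgMinOn Φ (ArgMin Ψ), ∃ p : H,
        (∀ y ∈ ArgMin Ψ, (⟪p, y - xbar⟫ : ℝ) ≤ 0) ∧
        ∀ e : ℝ, 0 ≤ e →
          -omg e ≤ FConj Ψ (e • p) - SuppFn (ArgMin Ψ) (e • p)) := by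
  classical
  obtain ⟨hΨb, x₁, hx₁⟩ := hΨproper
  obtain ⟨hΦb, x₂, hx₂⟩ := hΦproper
  obtain ⟨xS, hxS⟩ := hSne
  have hxSC : xS ∈ ArgMin Ψ := hxS.1
  have hxSmin : ∀ y ∈ ArgMin Ψ, Φ xS ≤ Φ y := hxS.2
  have hΨ0 : ∀ x : H, (0 : EReal) ≤ Ψ x := fun x => hΨinf ▸ iInf_le Ψ x
  have hΦ0 : ∀ x ∈ ArgMin Ψ, (0 : EReal) ≤ Φ x := fun x hx =>
    hΦinf ▸ iInf_le (fun y : ArgMin Ψ => Φ (y : H)) ⟨x, hx⟩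
  have hxSC' : ∀ z, Ψ xS ≤ Ψ z := hxSC
  have hΨxS : Ψ xS = 0 :=
    le_antisymm (by rw [← hΨinf]; exact le_iInf fun z => hxSC' z) (hΨ0 xS)
  have hΦxS : Φ xS = 0 :=
    le_antisymm (by rw [← hΦinf]; exact le_iInf fun y => hxSmin y y.2) (hΦ0 xS hxSC)
  have homg_le : ∀ e : ℝ, 0 ≤ e → omg e ≤ 0 := by
    intro e he
    rw [homg e]
    refine le_trans (iInf_le _ xS) ?_
    rw [hΨxS, hΦxS, mul_zero, add_zero]
  have hWD : ∀ e : ℝ, 0 ≤ e → ∀ p : H,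
      -omg e ≤ FConj Ψ (e • p) + (e : EReal) * FConj Φ (-p) := by
    intro e he p
    rw [homg e, EReal.neg_le]
    refine le_iInf fun x => ?_
    exact EReal.neg_le.mp (weak_dual Ψ Φ hΨb hΦb hx₁ e he p x)
  have parta : ∀ e : ℝ, 0 ≤ e →
      -omg e ≤ ⨅ p : H, (FConj Ψ (e • p) + (e : EReal) * FConj Φ (-p)) :=
    fun e he => le_iInf fun p => hWD e he p
  refine ⟨parta, ?_, ?_⟩
  · -- part (b)
    intro e he hob hqc
    obtain ⟨x₀, hx₀Ψ, hx₀c, hx₀Φ⟩ := hqc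
    have homT : omg e ≠ ⊤ := by
      intro h
      have h2 := homg_le e he.le
      rw [h] at h2
      exact absurd h2 (by simp)
    obtain ⟨m, hme⟩ : ∃ m : ℝ, omg e = ((m : ℝ) : EReal) :=
      ⟨_, (EReal.coe_toReal homT hob).symm⟩
    set g : H → EReal := fun x => (e : EReal) * Φ x with hgdef
    have hgb : ∀ x, g x ≠ ⊥ := fun x => OmegaAux.emul_ne_bot e he.le _ (hΦb x)
    have hswap : ∀ (c : ℝ) (w : EReal), (e : EReal) * ((c : EReal) * w) = (c : EReal) * ((e : EReal) * w) := by
      intro c w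
      rw [← mul_assoc, ← mul_assoc, mul_comm ((e : ℝ) : EReal) ((c : ℝ) : EReal)]
    have hgconv : EConvex g := by
      intro x y a b ha hb hab
      have h2 : (e : EReal) * Φ (a • x + b • y) ≤
          (e : EReal) * ((a : EReal) * Φ x + (b : EReal) * Φ y) :=
        OmegaAux.emul_le_emul e he.le (hΦconv x y a b ha hb hab)
      have h3 : (e : EReal) * ((a : EReal) * Φ x + (b : EReal) * Φ y)
          = (a : EReal) * ((e : EReal) * Φ x) + (b : EReal) * ((e : EReal) * Φ y) := by
        rw [OmegaAux.emul_add e he.le _ _ (OmegaAux.emul_ne_bot a ha _ (hΦb x))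
          (OmegaAux.emul_ne_bot b hb _ (hΦb y)), hswap a (Φ x), hswap b (Φ y)]
      exact h2.trans_eq h3
    have hm : ∀ x, ((m : ℝ) : EReal) ≤ Ψ x + g x := by
      intro x
      rw [← hme, homg e]
      exact iInf_le _ x
    obtain ⟨r₀, hr₀⟩ : ∃ r₀ : ℝ, Φ x₀ = ((r₀ : ℝ) : EReal) :=
      ⟨_, (EReal.coe_toReal hx₀Φ (hΦb x₀)).symm⟩
    have hev : ∀ᶠ x in 𝓝 x₀, Φ x < ((r₀ + 1 : ℝ) : EReal) := by
      have hlt : Φ x₀ < ((r₀ + 1 : ℝ) : EReal) := by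
        rw [hr₀]; exact_mod_cast lt_add_one r₀
      exact hx₀c (Iio_mem_nhds hlt)
    have hU : ∀ᶠ x in 𝓝 x₀, g x < ((e * (r₀ + 1) : ℝ) : EReal) := by
      refine hev.mono fun x hx => ?_
      obtain ⟨v, hv⟩ : ∃ v : ℝ, Φ x = ((v : ℝ) : EReal) :=
        ⟨_, (EReal.coe_toReal (ne_top_of_lt hx) (hΦb x)).symm⟩
      have hvlt : v < r₀ + 1 := by rw [hv] at hx; exact_mod_cast hx
      show (e : EReal) * Φ x < ((e * (r₀ + 1) : ℝ) : EReal)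
      rw [hv, ← EReal.coe_mul]
      exact_mod_cast mul_lt_mul_of_pos_left hvlt he
    obtain ⟨q, hq⟩ := fenchel_sep Ψ g hΨconv hgconv hΨb hgb x₀ hx₀Ψ (e * (r₀ + 1)) hU m hm
    have hgxS : g xS ≠ ⊤ := by
      show (e : EReal) * Φ xS ≠ ⊤
      rw [hΦxS, mul_zero]
      simp
    have hc1 : FConj g q ≠ ⊥ := fconj_ne_bot g hgb hgxS q
    have hc2 : FConj Ψ (-q) ≠ ⊥ := fconj_ne_bot Ψ hΨb hx₁ (-q)
    have hc1T : FConj g q ≠ ⊤ := by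
      intro h
      rw [h, EReal.top_add_of_ne_bot hc2] at hq
      exact absurd hq (by simp)
    have hc2T : FConj Ψ (-q) ≠ ⊤ := by
      intro h
      rw [h, EReal.add_top_of_ne_bot hc1] at hq
      exact absurd hq (by simp)
    obtain ⟨a₁, ha₁⟩ : ∃ a₁ : ℝ, FConj g q = ((a₁ : ℝ) : EReal) :=
      ⟨_, (EReal.coe_toReal hc1T hc1).symm⟩
    obtain ⟨a₂, ha₂⟩ : ∃ a₂ : ℝ, FConj Ψ (-q) = ((a₂ : ℝ) : EReal) :=
      ⟨_, (EReal.coe_toReal hc2T hc2).symm⟩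
    have hsum : a₁ + a₂ ≤ -m := by
      rw [ha₁, ha₂, ← EReal.coe_add] at hq
      exact_mod_cast hq
    set p := e⁻¹ • (-q) with hpdef
    have hep : e • p = -q := by
      rw [hpdef, smul_smul, mul_inv_cancel₀ (ne_of_gt he), one_smul]
    have hq2 : q = e • (-p) := by rw [smul_neg, hep, neg_neg]
    have hΦstar_le : FConj Φ (-p) ≤ ((a₁ / e : ℝ) : EReal) := by
      refine iSup_le fun x => ?_
      rcases eq_or_ne (Φ x) ⊤ with hPx | hPx
      · rw [hPx]
        exact le_trans (le_of_eq (by simp)) bot_le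
      obtain ⟨v, hv⟩ : ∃ v : ℝ, Φ x = ((v : ℝ) : EReal) :=
        ⟨_, (EReal.coe_toReal hPx (hΦb x)).symm⟩
      have h5 := fconj_lower g q x
      rw [ha₁] at h5
      have hgx : g x = ((e * v : ℝ) : EReal) := by
        show (e : EReal) * Φ x = ((e * v : ℝ) : EReal)
        rw [hv, ← EReal.coe_mul]
      rw [hgx, ← EReal.coe_sub] at h5
      have h6 : ⟪q, x⟫ - e * v ≤ a₁ := by exact_mod_cast h5
      have h7 : ⟪q, x⟫ = e * ⟪-p, x⟫ := by rw [hq2, real_inner_smul_left]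
      rw [hv, ← EReal.coe_sub]
      refine EReal.coe_le_coe_iff.2 ?_
      rw [le_div_iff₀ he]
      nlinarith [h6, h7]
    have hΦstar_ne : FConj Φ (-p) ≠ ⊥ := fconj_ne_bot Φ hΦb hx₂ (-p)
    have hΦstar_T : FConj Φ (-p) ≠ ⊤ := by
      intro h
      rw [h] at hΦstar_le
      exact absurd hΦstar_le (by simp)
    obtain ⟨bv, hbv⟩ : ∃ bv : ℝ, FConj Φ (-p) = ((bv : ℝ) : EReal) :=
      ⟨_, (EReal.coe_toReal hΦstar_T hΦstar_ne).symm⟩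
    have hbv_le : bv ≤ a₁ / e := by
      rw [hbv] at hΦstar_le
      exact_mod_cast hΦstar_le
    have hmain_le : FConj Ψ (e • p) + (e : EReal) * FConj Φ (-p) ≤ ((-m : ℝ) : EReal) := by
      rw [hep, ha₂, hbv, ← EReal.coe_mul, ← EReal.coe_add]
      refine EReal.coe_le_coe_iff.2 ?_
      have h8 : e * (a₁ / e) = a₁ := by field_simp
      have h9 := mul_le_mul_of_nonneg_left hbv_le he.le
      rw [h8] at h9
      linarith
    have hneg : -omg e = ((-m : ℝ) : EReal) := by rw [hme, ← EReal.coe_neg]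
    have heq : -omg e = FConj Ψ (e • p) + (e : EReal) * FConj Φ (-p) :=
      le_antisymm (hWD e he.le p) (by rw [hneg]; exact hmain_le)
    exact ⟨p, heq, fun q' => heq ▸ hWD e he.le q'⟩
  · -- part (c)
    rintro ⟨x₀, hx₀C, hx₀c, hx₀Φ⟩
    have hCconv : Convex ℝ (ArgMin Ψ) := by
      intro x hx y hy a b ha hb hab
      have hx' : ∀ z, Ψ x ≤ Ψ z := hx
      have hy' : ∀ z, Ψ y ≤ Ψ z := hy
      have hΨx : Ψ x = 0 :=
        le_antisymm (by rw [← hΨinf]; exact le_iInf fun z => hx' z) (hΨ0 x)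
      have hΨy : Ψ y = 0 :=
        le_antisymm (by rw [← hΨinf]; exact le_iInf fun z => hy' z) (hΨ0 y)
      show ∀ z, Ψ (a • x + b • y) ≤ Ψ z
      intro z
      have h1 := hΨconv x y a b ha hb hab
      rw [hΨx, hΨy, mul_zero, mul_zero, add_zero] at h1
      exact le_trans h1 (hΨ0 z)
    set δ : H → EReal := fun x => if x ∈ ArgMin Ψ then (0 : EReal) else ⊤ with hδdef
    have hδb : ∀ x, δ x ≠ ⊥ := by
      intro x
      by_cases h : x ∈ ArgMin Ψ <;> simp [hδdef, h]
    have hδval : ∀ x ∈ ArgMin Ψ, δ x = 0 := by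
      intro x hx; simp [hδdef, hx]
    have hδtop : ∀ x, x ∉ ArgMin Ψ → δ x = ⊤ := by
      intro x hx; simp [hδdef, hx]
    have hδconv : EConvex δ := by
      intro x y a b ha hb hab
      rcases eq_or_lt_of_le ha with h0 | h0
      · have hb1 : b = 1 := by linarith
        rw [← h0, hb1]
        simp
      rcases eq_or_lt_of_le hb with h0' | h0'
      · have ha1 : a = 1 := by linarith
        rw [← h0', ha1]
        simp
      by_cases hx : x ∈ ArgMin Ψ
      · by_cases hy : y ∈ ArgMin Ψ
        · have hmem := hCconv hx hy ha hb hab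
          rw [hδval _ hmem, hδval _ hx, hδval _ hy, mul_zero, mul_zero, add_zero]
        · have hyt : (b : EReal) * δ y = ⊤ := by
            rw [hδtop _ hy]; exact EReal.coe_mul_top_of_pos h0'
          rw [hyt, EReal.add_top_of_ne_bot (OmegaAux.emul_ne_bot a ha _ (hδb x))]
          exact le_top
      · have hxt : (a : EReal) * δ x = ⊤ := by
          rw [hδtop _ hx]; exact EReal.coe_mul_top_of_pos h0
        rw [hxt, EReal.top_add_of_ne_bot (OmegaAux.emul_ne_bot b hb _ (hδb y))]
        exact le_top
    have hδx₀ : δ x₀ ≠ ⊤ := by rw [hδval _ hx₀C]; simp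
    have hm0 : ∀ x, ((0 : ℝ) : EReal) ≤ δ x + Φ x := by
      intro x
      by_cases hx : x ∈ ArgMin Ψ
      · rw [hδval _ hx, zero_add, EReal.coe_zero]
        exact hΦ0 x hx
      · rw [hδtop _ hx, EReal.top_add_of_ne_bot (hΦb x)]
        exact le_top
    obtain ⟨r₀, hr₀⟩ : ∃ r₀ : ℝ, Φ x₀ = ((r₀ : ℝ) : EReal) :=
      ⟨_, (EReal.coe_toReal hx₀Φ (hΦb x₀)).symm⟩
    have hU : ∀ᶠ x in 𝓝 x₀, Φ x < ((r₀ + 1 : ℝ) : EReal) := by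
      have hlt : Φ x₀ < ((r₀ + 1 : ℝ) : EReal) := by
        rw [hr₀]; exact_mod_cast lt_add_one r₀
      exact hx₀c (Iio_mem_nhds hlt)
    obtain ⟨q, hq⟩ := fenchel_sep δ Φ hδconv hΦconv hδb hΦb x₀ hδx₀ (r₀ + 1) hU 0 hm0
    have hlow1 : ((⟪-q, xS⟫ : ℝ) : EReal) ≤ FConj δ (-q) := by
      have h1 := fconj_lower δ (-q) xS
      rwa [hδval _ hxSC, sub_zero] at h1
    have hlow2 : ((⟪q, xS⟫ : ℝ) : EReal) ≤ FConj Φ q := by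
      have h1 := fconj_lower Φ q xS
      rwa [hΦxS, sub_zero] at h1
    have hne1 : FConj δ (-q) ≠ ⊥ := ne_bot_of_le_ne_bot (EReal.coe_ne_bot _) hlow1
    have hne2 : FConj Φ q ≠ ⊥ := ne_bot_of_le_ne_bot (EReal.coe_ne_bot _) hlow2
    have hT2 : FConj Φ q ≠ ⊤ := by
      intro h; rw [h, EReal.top_add_of_ne_bot hne1] at hq; exact absurd hq (by simp)
    have hT1 : FConj δ (-q) ≠ ⊤ := by
      intro h; rw [h, EReal.add_top_of_ne_bot hne2] at hq; exact absurd hq (by simp)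
    obtain ⟨a₁, ha₁⟩ : ∃ a₁ : ℝ, FConj δ (-q) = ((a₁ : ℝ) : EReal) :=
      ⟨_, (EReal.coe_toReal hT1 hne1).symm⟩
    obtain ⟨b₁, hb₁⟩ : ∃ b₁ : ℝ, FConj Φ q = ((b₁ : ℝ) : EReal) :=
      ⟨_, (EReal.coe_toReal hT2 hne2).symm⟩
    have habsum : b₁ + a₁ ≤ 0 := by
      rw [ha₁, hb₁, ← EReal.coe_add] at hq
      have : (b₁ + a₁ : ℝ) ≤ (-(0:ℝ) : ℝ) := by exact_mod_cast hq
      linarith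
    have hge1 : ⟪-q, xS⟫ ≤ a₁ := by
      rw [ha₁] at hlow1; exact_mod_cast hlow1
    have hge2 : ⟪q, xS⟫ ≤ b₁ := by
      rw [hb₁] at hlow2; exact_mod_cast hlow2
    have hinner : ⟪-q, xS⟫ = -⟪q, xS⟫ := inner_neg_left q xS
    have ha₁eq : a₁ = ⟪-q, xS⟫ := le_antisymm (by rw [hinner]; linarith) hge1
    have hb₁eq : b₁ = ⟪q, xS⟫ := le_antisymm (by linarith [hinner, hge1, habsum]) hge2
    have hptle : ∀ y ∈ ArgMin Ψ, ⟪-q, y⟫ ≤ ⟪-q, xS⟫ := by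
      intro y hy
      have h1 := fconj_lower δ (-q) y
      rw [hδval _ hy, sub_zero, ha₁] at h1
      have : ⟪-q, y⟫ ≤ a₁ := by exact_mod_cast h1
      linarith [ha₁eq]
    refine ⟨xS, ⟨hxSC, hxSmin⟩, -q, ?_, ?_⟩
    · intro y hy
      rw [inner_sub_right]
      have := hptle y hy
      linarith
    · intro e he
      have hSupp : SuppFn (ArgMin Ψ) (e • (-q)) = ((e * ⟪-q, xS⟫ : ℝ) : EReal) := by
        apply le_antisymm
        · refine iSup_le fun y => ?_
          refine EReal.coe_le_coe_iff.2 ?_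
          rw [real_inner_smul_left]
          exact mul_le_mul_of_nonneg_left (hptle (y : H) y.2) he
        · have h1 := le_iSup (fun y : ArgMin Ψ => ((⟪e • (-q), (y : H)⟫ : ℝ) : EReal))
            (⟨xS, hxSC⟩ : ArgMin Ψ)
          rw [real_inner_smul_left] at h1
          exact h1
      rw [hSupp]
      have hWDp := hWD e he (-q)
      rw [neg_neg] at hWDp
      have hval : (e : EReal) * FConj Φ q = ((e * b₁ : ℝ) : EReal) := by
        rw [hb₁, ← EReal.coe_mul]
      have hval2 : (e * b₁ : ℝ) = -(e * ⟪-q, xS⟫) := by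
        rw [hb₁eq, hinner]; ring
      calc -omg e ≤ FConj Ψ (e • (-q)) + (e : EReal) * FConj Φ q := hWDp
        _ = FConj Ψ (e • (-q)) - ((e * ⟪-q, xS⟫ : ℝ) : EReal) := by
            rw [hval, sub_eq_add_neg, ← EReal.coe_neg, hval2]
end

section
/- Let Ψ : H → ℝ ∪ {+∞} be a closed convex function with C = argmin Ψ ≠ ∅, and let θ : ℝ → ℝ ∪ {+∞} be a closed convex even function with θ(0) = 0. Suppose that Ψ(x) ≥ θ(d(x,C)) for every x ∈ H. Then for every ε ≥ 0 and every p ∈ H, Ψ*(εp) − σ_C(εp) ≤ θ*(ε‖p‖). -/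
open MeasureTheory Set Filter Topology ENNReal RealInnerProductSpace

variable {H : Type*} [NormedAddCommGroup H] [InnerProductSpace ℝ H] [CompleteSpace H]

/-- if `Ψ ≥ θ(d(·,C))` with `C = argmin Ψ` and `θ` a closed convex even
function with `θ(0) = 0`, then `Ψ*(εp) − σ_C(εp) ≤ θ*(ε‖p‖)` for all `ε ≥ 0`, `p ∈ H`. -/
theorem conditioning_conjugate_bound
    (Ψ : H → EReal)
    (hΨlsc : LowerSemicontinuous Ψ) (hΨconv : EConvex Ψ)
    (hΨnobot : ∀ x : H, Ψ x ≠ ⊥)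
    (hCne : (ArgMin Ψ).Nonempty)
    (θ : ℝ → EReal)
    (hθlsc : LowerSemicontinuous θ) (hθconv : EConvex θ)
    (hθnobot : ∀ t : ℝ, θ t ≠ ⊥)
    (hθeven : ∀ t : ℝ, θ (-t) = θ t) (hθzero : θ 0 = 0)
    (hmin : ∀ x : H, θ (Metric.infDist x (ArgMin Ψ)) ≤ Ψ x) :
    ∀ e : ℝ, 0 ≤ e → ∀ p : H,
      FConj Ψ (e • p) - SuppFn (ArgMin Ψ) (e • p) ≤
        ⨆ t : ℝ, (((e * ‖p‖ * t : ℝ) : EReal) - θ t) := by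
  intro e he p
  obtain ⟨x₀, hx₀⟩ := hCne
  set C := ArgMin Ψ with hC
  haveI : Nonempty C := ⟨⟨x₀, hx₀⟩⟩
  -- C is closed
  have hCclosed : IsClosed C := by
    have hEq : C = ⋂ y : H, Ψ ⁻¹' Set.Iic (Ψ y) := by
      ext x; simp [hC, ArgMin, Set.mem_iInter]
    rw [hEq]
    exact isClosed_iInter fun y => hΨlsc.isClosed_preimage (Ψ y)
  -- C is convex
  have hCconv : Convex ℝ C := by
    intro x hx y hy a b ha hb hab
    intro w
    rcases eq_or_lt_of_le ha with ha0 | ha0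
    · have hb1 : b = 1 := by linarith
      simpa [← ha0, hb1] using hy w
    rcases eq_or_lt_of_le hb with hb0 | hb0
    · have ha1 : a = 1 := by linarith
      simpa [← hb0, ha1] using hx w
    calc Ψ (a • x + b • y) ≤ (a : EReal) * Ψ x + (b : EReal) * Ψ y :=
          hΨconv x y a b ha hb hab
      _ ≤ (a : EReal) * Ψ w + (b : EReal) * Ψ w :=
          add_le_add (mul_le_mul_of_nonneg_left (hx w) (by exact_mod_cast ha))
            (mul_le_mul_of_nonneg_left (hy w) (by exact_mod_cast hb))
      _ = ((a : EReal) + (b : EReal)) * Ψ w :=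
          (EReal.right_distrib_of_nonneg (by exact_mod_cast ha) (by exact_mod_cast hb)).symm
      _ = Ψ w := by
          rw [← EReal.coe_add, hab, EReal.coe_one, one_mul]
  set T : EReal := ⨆ t : ℝ, (((e * ‖p‖ * t : ℝ) : EReal) - θ t) with hT
  set σ : EReal := SuppFn C (e • p) with hσ
  have hσbot : σ ≠ ⊥ := by
    have h1 : ((⟪e • p, x₀⟫ : ℝ) : EReal) ≤ σ :=
      le_iSup (fun x : C => ((⟪e • p, (x : H)⟫ : ℝ) : EReal)) ⟨x₀, hx₀⟩
    intro h
    rw [h, le_bot_iff] at h1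
    exact EReal.coe_ne_bot _ h1
  by_cases hσtop : σ = ⊤
  · rw [hσtop, EReal.sub_top]
    exact bot_le
  rw [EReal.sub_le_iff_le_add (Or.inl hσbot) (Or.inl hσtop)]
  apply iSup_le
  intro x
  by_cases hxtop : Ψ x = ⊤
  · rw [hxtop, EReal.sub_top]
    exact bot_le
  set v : ℝ := (Ψ x).toReal with hvdef
  have hv : Ψ x = (v : EReal) := (EReal.coe_toReal hxtop (hΨnobot x)).symm
  obtain ⟨z, hzC, hznorm⟩ :=
    exists_norm_eq_iInf_of_complete_convex ⟨x₀, hx₀⟩ hCclosed.isComplete hCconv x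
  set d : ℝ := ‖x - z‖ with hddef
  have hd : Metric.infDist x C = d := by
    rw [Metric.infDist_eq_iInf, hznorm]
    congr 1
    ext y
    rw [dist_eq_norm]
  have hθd : θ d ≤ Ψ x := by rw [← hd]; exact hmin x
  have hθdtop : θ d ≠ ⊤ := by
    intro h
    rw [h, hv, top_le_iff] at hθd
    exact EReal.coe_ne_top _ hθd
  set r : ℝ := (θ d).toReal with hrdef
  have hr : θ d = (r : EReal) := (EReal.coe_toReal hθdtop (hθnobot d)).symm
  have hrv : r ≤ v := by
    rw [hr, hv] at hθd
    exact_mod_cast hθd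
  have hinner : (⟪e • p, x⟫ : ℝ) ≤ (⟪e • p, z⟫ : ℝ) + e * ‖p‖ * d := by
    have h2 : (⟪e • p, x - z⟫ : ℝ) ≤ e * ‖p‖ * d := by
      calc (⟪e • p, x - z⟫ : ℝ) ≤ ‖e • p‖ * ‖x - z‖ := real_inner_le_norm _ _
        _ = e * ‖p‖ * d := by rw [norm_smul, Real.norm_eq_abs, abs_of_nonneg he]
    have h3 : (⟪e • p, x - z⟫ : ℝ) = (⟪e • p, x⟫ : ℝ) - (⟪e • p, z⟫ : ℝ) :=
      inner_sub_right _ _ _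
    linarith
  have h4 : ((e * ‖p‖ * d - r : ℝ) : EReal) ≤ T := by
    have h5 : ((e * ‖p‖ * d - r : ℝ) : EReal)
        = ((e * ‖p‖ * d : ℝ) : EReal) - θ d := by
      rw [hr, ← EReal.coe_sub]
    rw [h5]
    exact le_iSup (fun t : ℝ => ((e * ‖p‖ * t : ℝ) : EReal) - θ t) d
  have h6 : ((⟪e • p, z⟫ : ℝ) : EReal) ≤ σ :=
    le_iSup (fun x : C => ((⟪e • p, (x : H)⟫ : ℝ) : EReal)) ⟨z, hzC⟩
  calc ((⟪e • p, x⟫ : ℝ) : EReal) - Ψ x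
      = (((⟪e • p, x⟫ : ℝ) - v : ℝ) : EReal) := by rw [hv, ← EReal.coe_sub]
    _ ≤ (((e * ‖p‖ * d - r) + (⟪e • p, z⟫ : ℝ) : ℝ) : EReal) := by
        apply EReal.coe_le_coe_iff.2
        linarith
    _ = ((e * ‖p‖ * d - r : ℝ) : EReal) + ((⟪e • p, z⟫ : ℝ) : EReal) := EReal.coe_add _ _
    _ ≤ T + σ := add_le_add h4 h6
end
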